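/- If a poset P has a Hasse diagram that is a tree and height 2, then there is a constant c(P) such that any family F ⊆ 2^[n] with |F| ≥ (1 + c(P)/n)·C(n,⌊n/2⌋) contains P as a (not necessarily induced) subposet. -/

import Mathlib

/-- A finite poset has height `h` if `h` is the maximum number of elements of a chain. -/
def HasHeight (α : Type*) [Preorder α] (h : ℕ) : Prop :=
  (∃ c : Finset α, IsChain (· ≤ ·) (c : Set α) ∧ c.card = h) ∧
    ∀ c : Finset α, IsChain (· ≤ ·) (c : Set α) → c.card ≤ h

section Poset
variable {α : Type} [PartialOrder α]

lemma no3 (hh : HasHeight α 2) {a b c : α} (h1 : a < b) (h2 : b < c) : False := by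
  classical
  have hab : a ≠ b := ne_of_lt h1
  have hbc : b ≠ c := ne_of_lt h2
  have hac : a ≠ c := ne_of_lt (h1.trans h2)
  have hchain : IsChain (· ≤ ·) (({a, b, c} : Finset α) : Set α) := by
    intro x hx y hy hxy
    simp only [Finset.coe_insert, Set.mem_insert_iff, Finset.coe_singleton,
      Set.mem_singleton_iff] at hx hy
    rcases hx with rfl | rfl | rfl <;> rcases hy with rfl | rfl | rfl <;>
      first
        | exact absurd rfl hxy
        | exact Or.inl (le_of_lt (by first | exact h1 | exact h2 | exact h1.trans h2))
        | exact Or.inr (le_of_lt (by first | exact h1 | exact h2 | exact h1.trans h2))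
  have hcard : ({a, b, c} : Finset α).card = 3 := by
    rw [Finset.card_insert_of_notMem (by simp [hab, hac]),
      Finset.card_insert_of_notMem (by simp [hbc])]
    simp
  have := hh.2 _ hchain
  omega

lemma exists_lt_pair (hh : HasHeight α 2) : ∃ a b : α, a < b := by
  classical
  obtain ⟨c, hc, hcard⟩ := hh.1
  obtain ⟨a, b, hab, hc2⟩ := Finset.card_eq_two.mp hcard
  rw [hc2] at hc
  have : a ≤ b ∨ b ≤ a := hc (by simp) (by simp) hab
  rcases this with h | h
  · exact ⟨a, b, lt_of_le_of_ne h hab⟩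
  · exact ⟨b, a, lt_of_le_of_ne h hab.symm⟩

/-- minimality predicate -/
def IsMinl {α : Type} [PartialOrder α] (v : α) : Prop := ∀ u : α, ¬ u < v

lemma lt_facts (hh : HasHeight α 2) {u v : α} (h : u < v) :
    IsMinl u ∧ ¬ IsMinl v ∧ u ⋖ v :=
  ⟨fun x hx => no3 hh hx h, fun hm => hm u h, h, fun _c hc hc' => no3 hh hc hc'⟩

lemma adj_iff {u v : α} (h : (SimpleGraph.hasse α).Adj u v) : u < v ∨ v < u := by
  rcases h with h | h
  · exact Or.inl h.lt
  · exact Or.inr h.lt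

lemma lt_covby (hh : HasHeight α 2) {u v : α} (h : u < v) : (SimpleGraph.hasse α).Adj u v :=
  Or.inl (lt_facts hh h).2.2

end Poset

section Tree
variable {V : Type} {G : SimpleGraph V}

lemma tree_struct (htree : G.IsTree) (r : V) :
    ∃ (depth : V → ℕ) (parent : V → V),
      (∀ v, v ≠ r → G.Adj (parent v) v ∧ depth (parent v) + 1 = depth v) ∧
      (∀ u v, G.Adj u v → (parent u = v ∧ u ≠ r) ∨ (parent v = u ∧ v ≠ r)) := by
  classical
  have hu := (SimpleGraph.isTree_iff_existsUnique_path.1 htree).2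
  have hch : ∀ v : V, ∃ p : G.Walk v r, p.IsPath ∧ ∀ q : G.Walk v r, q.IsPath → q = p := by
    intro v
    obtain ⟨p, hp, hup⟩ := hu v r
    exact ⟨p, hp, hup⟩
  choose pth hpathP huniq using hch
  have hnilr : pth r = SimpleGraph.Walk.nil := by
    exact (huniq r SimpleGraph.Walk.nil SimpleGraph.Walk.IsPath.nil).symm
  have hlenr : (pth r).length = 0 := by rw [hnilr]; rfl
  refine ⟨fun v => (pth v).length, fun v => (pth v).getVert 1, ?_, ?_⟩
  · intro v hv
    have hn : ¬ (pth v).Nil := SimpleGraph.Walk.not_nil_of_ne hv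
    refine ⟨(SimpleGraph.Walk.adj_snd hn).symm, ?_⟩
    have htail : (pth v).tail.IsPath := (hpathP v).tail
    show (pth ((pth v).getVert 1)).length + 1 = (pth v).length
    rw [← huniq _ _ htail]
    exact SimpleGraph.Walk.length_tail_add_one hn
  · intro u v hadj
    by_cases hm : u ∈ (pth v).support
    · right
      have ht : ((pth v).takeUntil u hm).IsPath := (hpathP v).takeUntil hm
      have hsing : ((pth v).takeUntil u hm) = SimpleGraph.Walk.cons hadj.symm SimpleGraph.Walk.nil := by
        have h2 : (SimpleGraph.Walk.cons hadj.symm SimpleGraph.Walk.nil : G.Walk v u).IsPath := by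
          simp [SimpleGraph.Walk.cons_isPath_iff, hadj.ne']
        obtain ⟨p, _hp, hup⟩ := hu v u
        rw [hup _ ht, hup _ h2]
      have hsplit := (pth v).take_spec hm
      rw [hsing] at hsplit
      have hvr : v ≠ r := by
        intro hvr; subst hvr
        have hlen := congrArg SimpleGraph.Walk.length hsplit
        rw [hlenr] at hlen
        simp [SimpleGraph.Walk.length_append] at hlen
      refine ⟨?_, hvr⟩
      have hg := congrArg (fun w : G.Walk v r => w.getVert 1) hsplit
      simp only [SimpleGraph.Walk.getVert_append] at hg
      show (pth v).getVert 1 = u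
      rw [← hg]
      norm_num
    · left
      have hq : (SimpleGraph.Walk.cons hadj (pth v) : G.Walk u r).IsPath := by
        rw [SimpleGraph.Walk.cons_isPath_iff]
        exact ⟨hpathP v, hm⟩
      have heq := huniq u _ hq
      have hur : u ≠ r := by
        intro hur; subst hur
        have hlen := congrArg SimpleGraph.Walk.length heq
        rw [hlenr] at hlen
        simp at hlen
      refine ⟨?_, hur⟩
      show (pth u).getVert 1 = v
      rw [← heq]
      simp [SimpleGraph.Walk.getVert_cons_succ]

end Tree

section Embed
variable {α : Type} [Fintype α] [PartialOrder α] {β : Type} [DecidableEq β]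

lemma embed_tree (hh : HasHeight α 2) (htree : (SimpleGraph.hasse α).IsTree)
    (M₀ M₁ : Finset (Finset β)) {k : ℕ} (hk : Fintype.card α ≤ k)
    (h₀ : ∀ S ∈ M₀, k ≤ (M₁.filter (fun B => S ⊂ B)).card)
    (h₁ : ∀ S ∈ M₁, k ≤ (M₀.filter (fun B => B ⊂ S)).card)
    (hne : M₀.Nonempty ∨ M₁.Nonempty) :
    ∃ f : α → Finset β, Function.Injective f ∧ (∀ a, f a ∈ M₀ ∪ M₁) ∧
      ∀ a b : α, a < b → f a ⊂ f b := by
  classical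
  have hNe : Nonempty α := htree.isConnected.nonempty
  have hk1 : 1 ≤ k := le_trans (Nat.succ_le_of_lt Fintype.card_pos) hk
  have hMM : M₀.Nonempty ∧ M₁.Nonempty := by
    rcases hne with ⟨S, hS⟩ | ⟨S, hS⟩
    · refine ⟨⟨S, hS⟩, ?_⟩
      have := h₀ S hS
      have hpos : 0 < (M₁.filter (fun B => S ⊂ B)).card := by omega
      obtain ⟨T, hT⟩ := Finset.card_pos.mp hpos
      exact ⟨T, (Finset.mem_filter.mp hT).1⟩
    · refine ⟨?_, ⟨S, hS⟩⟩
      have := h₁ S hS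
      have hpos : 0 < (M₀.filter (fun B => B ⊂ S)).card := by omega
      obtain ⟨T, hT⟩ := Finset.card_pos.mp hpos
      exact ⟨T, (Finset.mem_filter.mp hT).1⟩
  obtain ⟨r⟩ := hNe
  obtain ⟨depth, parent, hpar, hedge⟩ := tree_struct htree r
  have key : ∀ (m : ℕ) (s : Finset α), s.card ≤ m → r ∈ s →
      (∀ v ∈ s, v ≠ r → parent v ∈ s) →
      ∃ f : α → Finset β, Set.InjOn f ↑s ∧
        (∀ a ∈ s, (IsMinl a → f a ∈ M₀) ∧ (¬ IsMinl a → f a ∈ M₁)) ∧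
        (∀ a ∈ s, ∀ b ∈ s, a < b → f a ⊂ f b) := by
    intro m
    induction m with
    | zero =>
      intro s hcard hr _
      have := Finset.card_pos.mpr ⟨r, hr⟩
      omega
    | succ m ih =>
      intro s hcard hr hcl
      by_cases hsr : s = {r}
      · subst hsr
        have hsing : ∀ a ∈ ({r} : Finset α), a = r := fun a ha => Finset.mem_singleton.mp ha
        have hlt' : ∀ (a b : α), a ∈ ({r} : Finset α) → b ∈ ({r} : Finset α) → a < b → False := by
          intro a b ha hb hab
          rw [hsing a ha, hsing b hb] at hab
          exact absurd hab (lt_irrefl r)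
        by_cases hmr : IsMinl r
        · obtain ⟨S, hS⟩ := hMM.1
          refine ⟨fun _ => S, ?_, ?_, fun a ha b hb hab => absurd (hlt' a b ha hb hab) not_false⟩
          · intro x hx y hy _
            have hx' : x = r := hsing x (Finset.mem_coe.mp hx)
            have hy' : y = r := hsing y (Finset.mem_coe.mp hy)
            rw [hx', hy']
          · intro a ha
            exact ⟨fun _ => hS, fun hna => absurd ((hsing a ha) ▸ hmr) hna⟩
        · obtain ⟨S, hS⟩ := hMM.2
          refine ⟨fun _ => S, ?_, ?_, fun a ha b hb hab => absurd (hlt' a b ha hb hab) not_false⟩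
          · intro x hx y hy _
            have hx' : x = r := hsing x (Finset.mem_coe.mp hx)
            have hy' : y = r := hsing y (Finset.mem_coe.mp hy)
            rw [hx', hy']
          · intro a ha
            exact ⟨fun hma => absurd ((hsing a ha) ▸ hma) hmr, fun _ => hS⟩
      · -- pick v of maximal depth in s.erase r
        have hern : (s.erase r).Nonempty := by
          have h2 : 1 < s.card := by
            rcases Finset.eq_singleton_or_nontrivial hr with h | h
            · exact absurd h hsr
            · exact Finset.one_lt_card.mpr h
          obtain ⟨x, hx, hxr⟩ := Finset.exists_mem_ne h2 r
          exact ⟨x, Finset.mem_erase.mpr ⟨hxr, hx⟩⟩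
        obtain ⟨v, hvmem, hmax⟩ := Finset.exists_max_image (s.erase r) depth hern
        have hvr : v ≠ r := (Finset.mem_erase.mp hvmem).1
        have hvs : v ∈ s := (Finset.mem_erase.mp hvmem).2
        have hrs' : r ∈ s.erase v := Finset.mem_erase.mpr ⟨fun h => hvr h.symm, hr⟩
        have hcl' : ∀ w ∈ s.erase v, w ≠ r → parent w ∈ s.erase v := by
          intro w hw hwr
          have hws : w ∈ s := (Finset.mem_erase.mp hw).2
          have hpws : parent w ∈ s := hcl w hws hwr
          refine Finset.mem_erase.mpr ⟨?_, hpws⟩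
          intro hpwv
          have hdw : depth (parent w) + 1 = depth w := (hpar w hwr).2
          rw [hpwv] at hdw
          have : depth w ≤ depth v := hmax w (Finset.mem_erase.mpr ⟨hwr, hws⟩)
          omega
        have hscard1 : 1 ≤ s.card := Finset.card_pos.mpr ⟨v, hvs⟩
        have hs'card : (s.erase v).card = s.card - 1 := Finset.card_erase_of_mem hvs
        have hcard' : (s.erase v).card ≤ m := by omega
        obtain ⟨f', hinj, hpool, hord⟩ := ih (s.erase v) hcard' hrs' hcl'
        have hpadj : (SimpleGraph.hasse α).Adj (parent v) v := (hpar v hvr).1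
        have hps : parent v ∈ s := hcl v hvs hvr
        have hpv : parent v ≠ v := hpadj.ne
        have hps' : parent v ∈ s.erase v := Finset.mem_erase.mpr ⟨hpv, hps⟩
        have hnb : ∀ u ∈ s, (SimpleGraph.hasse α).Adj u v → u = parent v := by
          intro u hu hadj
          rcases hedge u v hadj with ⟨h1, h2⟩ | ⟨h1, _h2⟩
          · exfalso
            have hdu : depth (parent u) + 1 = depth u := (hpar u h2).2
            rw [h1] at hdu
            have : depth u ≤ depth v := hmax u (Finset.mem_erase.mpr ⟨h2, hu⟩)
            omega
          · exact h1.symm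
        have hscardle : s.card ≤ Fintype.card α := Finset.card_le_univ s
        have husedcard : ((s.erase v).image f').card ≤ k - 1 := by
          have h1 : ((s.erase v).image f').card ≤ (s.erase v).card := Finset.card_image_le
          omega
        rcases adj_iff hpadj with hlt | hlt
        · -- parent v < v
          obtain ⟨hminp, hnminv, _⟩ := lt_facts hh hlt
          have hfp : f' (parent v) ∈ M₀ := (hpool _ hps').1 hminp
          have hcandcard : k ≤ (M₁.filter (fun B => f' (parent v) ⊂ B)).card := h₀ _ hfp
          have hT : ((M₁.filter (fun B => f' (parent v) ⊂ B)) \ (s.erase v).image f').Nonempty := by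
            have := Finset.le_card_sdiff ((s.erase v).image f')
              (M₁.filter (fun B => f' (parent v) ⊂ B))
            refine Finset.card_pos.mp ?_
            omega
          obtain ⟨T, hTmem⟩ := hT
          have hTc := (Finset.mem_sdiff.mp hTmem).1
          have hTnotused : T ∉ (s.erase v).image f' := (Finset.mem_sdiff.mp hTmem).2
          have hTM : T ∈ M₁ := (Finset.mem_filter.mp hTc).1
          have hTsub : f' (parent v) ⊂ T := (Finset.mem_filter.mp hTc).2
          refine ⟨Function.update f' v T, ?_, ?_, ?_⟩
          · intro x hx y hy hxy
            by_cases hxv : x = v <;> by_cases hyv : y = v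
            · rw [hxv, hyv]
            · exfalso
              rw [hxv, Function.update_self, Function.update_of_ne hyv] at hxy
              exact hTnotused (Finset.mem_image.mpr
                ⟨y, Finset.mem_erase.mpr ⟨hyv, Finset.mem_coe.mp hy⟩, hxy.symm⟩)
            · exfalso
              rw [hyv, Function.update_self, Function.update_of_ne hxv] at hxy
              exact hTnotused (Finset.mem_image.mpr
                ⟨x, Finset.mem_erase.mpr ⟨hxv, Finset.mem_coe.mp hx⟩, hxy⟩)
            · rw [Function.update_of_ne hxv, Function.update_of_ne hyv] at hxy
              exact hinj
                (Finset.mem_coe.mpr (Finset.mem_erase.mpr ⟨hxv, Finset.mem_coe.mp hx⟩))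
                (Finset.mem_coe.mpr (Finset.mem_erase.mpr ⟨hyv, Finset.mem_coe.mp hy⟩)) hxy
          · intro a ha
            by_cases hav : a = v
            · rw [hav, Function.update_self]
              refine ⟨fun hma => absurd (hav ▸ hma) hnminv, fun _ => hTM⟩
            · rw [Function.update_of_ne hav]
              exact hpool a (Finset.mem_erase.mpr ⟨hav, ha⟩)
          · intro a ha b hb hab
            by_cases hav : a = v <;> by_cases hbv : b = v
            · exfalso; rw [hav, hbv] at hab; exact absurd hab (lt_irrefl v)
            · exfalso
              rw [hav] at hab
              have hadj2 : (SimpleGraph.hasse α).Adj b v := (lt_covby hh hab).symm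
              have hbp := hnb b hb hadj2
              rw [hbp] at hab
              exact absurd (hab.trans hlt) (lt_irrefl v)
            · have hadj2 : (SimpleGraph.hasse α).Adj a v := lt_covby hh (hbv ▸ hab)
              have hap := hnb a ha hadj2
              rw [hbv, Function.update_self, Function.update_of_ne hav, hap]
              exact hTsub
            · rw [Function.update_of_ne hav, Function.update_of_ne hbv]
              exact hord a (Finset.mem_erase.mpr ⟨hav, ha⟩) b (Finset.mem_erase.mpr ⟨hbv, hb⟩) hab
        · -- v < parent v
          obtain ⟨hminv, hnminp, _⟩ := lt_facts hh hlt
          have hfp : f' (parent v) ∈ M₁ := (hpool _ hps').2 hnminp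
          have hcandcard : k ≤ (M₀.filter (fun B => B ⊂ f' (parent v))).card := h₁ _ hfp
          have hT : ((M₀.filter (fun B => B ⊂ f' (parent v))) \ (s.erase v).image f').Nonempty := by
            have := Finset.le_card_sdiff ((s.erase v).image f')
              (M₀.filter (fun B => B ⊂ f' (parent v)))
            refine Finset.card_pos.mp ?_
            omega
          obtain ⟨T, hTmem⟩ := hT
          have hTc := (Finset.mem_sdiff.mp hTmem).1
          have hTnotused : T ∉ (s.erase v).image f' := (Finset.mem_sdiff.mp hTmem).2
          have hTM : T ∈ M₀ := (Finset.mem_filter.mp hTc).1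
          have hTsub : T ⊂ f' (parent v) := (Finset.mem_filter.mp hTc).2
          refine ⟨Function.update f' v T, ?_, ?_, ?_⟩
          · intro x hx y hy hxy
            by_cases hxv : x = v <;> by_cases hyv : y = v
            · rw [hxv, hyv]
            · exfalso
              rw [hxv, Function.update_self, Function.update_of_ne hyv] at hxy
              exact hTnotused (Finset.mem_image.mpr
                ⟨y, Finset.mem_erase.mpr ⟨hyv, Finset.mem_coe.mp hy⟩, hxy.symm⟩)
            · exfalso
              rw [hyv, Function.update_self, Function.update_of_ne hxv] at hxy
              exact hTnotused (Finset.mem_image.mpr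
                ⟨x, Finset.mem_erase.mpr ⟨hxv, Finset.mem_coe.mp hx⟩, hxy⟩)
            · rw [Function.update_of_ne hxv, Function.update_of_ne hyv] at hxy
              exact hinj
                (Finset.mem_coe.mpr (Finset.mem_erase.mpr ⟨hxv, Finset.mem_coe.mp hx⟩))
                (Finset.mem_coe.mpr (Finset.mem_erase.mpr ⟨hyv, Finset.mem_coe.mp hy⟩)) hxy
          · intro a ha
            by_cases hav : a = v
            · rw [hav, Function.update_self]
              exact ⟨fun _ => hTM, fun hna => absurd (hav ▸ hminv) hna⟩
            · rw [Function.update_of_ne hav]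
              exact hpool a (Finset.mem_erase.mpr ⟨hav, ha⟩)
          · intro a ha b hb hab
            by_cases hav : a = v <;> by_cases hbv : b = v
            · exfalso; rw [hav, hbv] at hab; exact absurd hab (lt_irrefl v)
            · have hadj2 : (SimpleGraph.hasse α).Adj b v := (lt_covby hh (hav ▸ hab)).symm
              have hbp := hnb b hb hadj2
              rw [hav, Function.update_self, Function.update_of_ne (hbp ▸ hpv : b ≠ v)]
              · rw [hbp]; exact hTsub
            · exfalso
              rw [hbv] at hab
              exact absurd hab (hminv a)
            · rw [Function.update_of_ne hav, Function.update_of_ne hbv]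
              exact hord a (Finset.mem_erase.mpr ⟨hav, ha⟩) b (Finset.mem_erase.mpr ⟨hbv, hb⟩) hab
  obtain ⟨f, hinj, hpool, hord⟩ := key (Fintype.card α) Finset.univ (by simp)
    (Finset.mem_univ r) (fun v _ _ => Finset.mem_univ _)
  refine ⟨f, ?_, ?_, ?_⟩
  · intro x y hxy
    exact hinj (by simp) (by simp) hxy
  · intro a
    by_cases hma : IsMinl a
    · exact Finset.mem_union_left _ ((hpool a (Finset.mem_univ a)).1 hma)
    · exact Finset.mem_union_right _ ((hpool a (Finset.mem_univ a)).2 hma)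
  · intro a b hab
    exact hord a (Finset.mem_univ a) b (Finset.mem_univ b) hab

end Embed


section SCD
variable {γ : Type} [DecidableEq γ]

lemma scd_exists (s : Finset γ) :
    ∃ P : Finset (Finset (Finset γ)),
      (∀ c ∈ P, IsChain (· ⊆ ·) (c : Set (Finset γ))) ∧
      (∀ c ∈ P, ∀ A ∈ c, A ⊆ s) ∧
      (∀ A : Finset γ, A ⊆ s → ∃ c ∈ P, A ∈ c) ∧
      (∀ A : Finset γ, ∀ c ∈ P, ∀ c' ∈ P, A ∈ c → A ∈ c' → c = c') ∧
      (∀ c ∈ P, ∃ l : ℕ, 2 * l ≤ s.card ∧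
        Finset.image Finset.card c = Finset.Icc l (s.card - l)) := by
  classical
  induction s using Finset.induction_on with
  | empty =>
    refine ⟨{{∅}}, ?_, ?_, ?_, ?_, ?_⟩
    · intro c hc
      rw [Finset.mem_singleton.mp hc]
      simp [IsChain]
    · intro c hc A hA
      rw [Finset.mem_singleton.mp hc] at hA
      rw [Finset.mem_singleton.mp hA]
    · intro A hA
      refine ⟨{∅}, Finset.mem_singleton_self _, ?_⟩
      rw [Finset.subset_empty.mp hA]
      exact Finset.mem_singleton_self _
    · intro A c hc c' hc' _ _
      rw [Finset.mem_singleton.mp hc, Finset.mem_singleton.mp hc']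
    · intro c hc
      refine ⟨0, by simp, ?_⟩
      rw [Finset.mem_singleton.mp hc]
      simp
  | @insert x s hx ih =>
    obtain ⟨P, hchain, hsub, hcover, huniq, hS⟩ := ih
    -- no element of a chain contains x
    have hnx : ∀ c ∈ P, ∀ A ∈ c, x ∉ A := fun c hc A hA hxA => hx (hsub c hc A hA hxA)
    -- chains are nonempty
    have hcne : ∀ c ∈ P, c.Nonempty := by
      intro c hc
      obtain ⟨l, hl, himg⟩ := hS c hc
      have : (Finset.image Finset.card c).Nonempty := by
        rw [himg]
        exact ⟨l, Finset.mem_Icc.mpr ⟨le_refl l, by omega⟩⟩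
      obtain ⟨j, hj⟩ := this
      obtain ⟨A, hA, _⟩ := Finset.mem_image.mp hj
      exact ⟨A, hA⟩
    -- card is injective on chains
    have hcardinj : ∀ c ∈ P, ∀ A ∈ c, ∀ B ∈ c, A.card = B.card → A = B := by
      intro c hc A hA B hB hcard
      by_cases hAB : A = B
      · exact hAB
      · rcases hchain c hc hA hB hAB with h | h
        · exact Finset.eq_of_subset_of_card_le h (le_of_eq hcard.symm)
        · exact (Finset.eq_of_subset_of_card_le h (le_of_eq hcard)).symm
    -- top elements
    have htop0 : ∀ c : Finset (Finset γ), ∃ A, c ∈ P → (A ∈ c ∧ ∀ B ∈ c, B ⊆ A) := by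
      intro c
      by_cases hc : c ∈ P
      · obtain ⟨M, hM, hMmax⟩ := Finset.exists_max_image c Finset.card (hcne c hc)
        refine ⟨M, fun _ => ⟨hM, ?_⟩⟩
        intro B hB
        by_cases hBM : B = M
        · rw [hBM]
        · rcases hchain c hc hB hM hBM with h | h
          · exact h
          · have hBM2 : B = M := hcardinj c hc B hB M hM
              (le_antisymm (hMmax B hB) (Finset.card_le_card h))
            rw [hBM2]
      · exact ⟨∅, fun h => absurd h hc⟩
    choose topF htopF using htop0
    have htopmem : ∀ c ∈ P, topF c ∈ c := fun c hc => (htopF c hc).1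
    have htople : ∀ c ∈ P, ∀ B ∈ c, B ⊆ topF c := fun c hc => (htopF c hc).2
    -- top has max card  N - l
    have htopcard : ∀ c ∈ P, ∀ l, Finset.image Finset.card c = Finset.Icc l (s.card - l) →
        (topF c).card = s.card - l := by
      intro c hc l himg
      have h1 : (topF c).card ∈ Finset.Icc l (s.card - l) := by
        rw [← himg]
        exact Finset.mem_image_of_mem _ (htopmem c hc)
      have h2 : s.card - l ∈ Finset.image Finset.card c := by
        rw [himg]
        exact Finset.mem_Icc.mpr ⟨le_trans (Finset.mem_Icc.mp h1).1 (Finset.mem_Icc.mp h1).2,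
          le_refl _⟩
      obtain ⟨A, hA, hAcard⟩ := Finset.mem_image.mp h2
      have := Finset.card_le_card (htople c hc A hA)
      have := (Finset.mem_Icc.mp h1).2
      omega
    set g1 : Finset (Finset γ) → Finset (Finset γ) :=
      fun c => insert (insert x (topF c)) c with hg1
    set g2 : Finset (Finset γ) → Finset (Finset γ) :=
      fun c => (c.erase (topF c)).image (insert x) with hg2
    set P' : Finset (Finset (Finset γ)) :=
      P.image g1 ∪ (P.filter (fun c => (c.erase (topF c)).Nonempty)).image g2 with hP'
    have hmemP' : ∀ C, C ∈ P' ↔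
        (∃ c ∈ P, C = g1 c) ∨ (∃ c ∈ P, (c.erase (topF c)).Nonempty ∧ C = g2 c) := by
      intro C
      rw [hP', Finset.mem_union, Finset.mem_image, Finset.mem_image]
      constructor
      · rintro (⟨c, hc, rfl⟩ | ⟨c, hc, rfl⟩)
        · exact Or.inl ⟨c, hc, rfl⟩
        · obtain ⟨hc1, hc2⟩ := Finset.mem_filter.mp hc
          exact Or.inr ⟨c, hc1, hc2, rfl⟩
      · rintro (⟨c, hc, rfl⟩ | ⟨c, hc, hne, rfl⟩)
        · exact Or.inl ⟨c, hc, rfl⟩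
        · exact Or.inr ⟨c, Finset.mem_filter.mpr ⟨hc, hne⟩, rfl⟩
    -- x ∉ topF c
    have hxtop : ∀ c ∈ P, x ∉ topF c := fun c hc => hnx c hc _ (htopmem c hc)
    refine ⟨P', ?_, ?_, ?_, ?_, ?_⟩
    · -- chains
      intro C hC
      rcases (hmemP' C).mp hC with ⟨c, hc, rfl⟩ | ⟨c, hc, hne, rfl⟩
      · intro A hA B hB hAB
        simp only [hg1, Finset.coe_insert, Set.mem_insert_iff, Finset.mem_coe] at hA hB
        rcases hA with rfl | hA <;> rcases hB with rfl | hB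
        · exact absurd rfl hAB
        · exact Or.inr ((htople c hc B hB).trans (Finset.subset_insert _ _))
        · exact Or.inl ((htople c hc A hA).trans (Finset.subset_insert _ _))
        · exact hchain c hc hA hB hAB
      · intro A hA B hB hAB
        simp only [hg2, Finset.coe_image, Set.mem_image, Finset.mem_coe] at hA hB
        obtain ⟨A', hA', rfl⟩ := hA
        obtain ⟨B', hB', rfl⟩ := hB
        have hA'B' : A' ≠ B' := fun h => hAB (by rw [h])
        rcases hchain c hc (Finset.mem_of_mem_erase hA') (Finset.mem_of_mem_erase hB') hA'B' with h | h
        · exact Or.inl (Finset.insert_subset_insert x h)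
        · exact Or.inr (Finset.insert_subset_insert x h)
    · -- subsets
      intro C hC A hA
      rcases (hmemP' C).mp hC with ⟨c, hc, rfl⟩ | ⟨c, hc, hne, rfl⟩
      · simp only [hg1, Finset.mem_insert] at hA
        rcases hA with rfl | hA
        · exact Finset.insert_subset_insert x (hsub c hc _ (htopmem c hc))
        · exact (hsub c hc A hA).trans (Finset.subset_insert x s)
      · simp only [hg2, Finset.mem_image] at hA
        obtain ⟨A', hA', rfl⟩ := hA
        exact Finset.insert_subset_insert x (hsub c hc A' (Finset.mem_of_mem_erase hA'))
    · -- cover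
      intro A hA
      by_cases hxA : x ∈ A
      · have hAe : A.erase x ⊆ s := by
          intro y hy
          have := hA (Finset.mem_of_mem_erase hy)
          rcases Finset.mem_insert.mp this with rfl | h
          · exact absurd rfl (Finset.ne_of_mem_erase hy)
          · exact h
        obtain ⟨c, hc, hAc⟩ := hcover (A.erase x) hAe
        by_cases htopA : A.erase x = topF c
        · refine ⟨g1 c, (hmemP' _).mpr (Or.inl ⟨c, hc, rfl⟩), ?_⟩
          simp only [hg1, Finset.mem_insert]
          left
          rw [← htopA, Finset.insert_erase hxA]
        · refine ⟨g2 c, (hmemP' _).mpr (Or.inr ⟨c, hc, ⟨A.erase x,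
            Finset.mem_erase.mpr ⟨htopA, hAc⟩⟩, rfl⟩), ?_⟩
          simp only [hg2, Finset.mem_image]
          exact ⟨A.erase x, Finset.mem_erase.mpr ⟨htopA, hAc⟩, Finset.insert_erase hxA⟩
      · have hAs : A ⊆ s := fun y hy => by
          rcases Finset.mem_insert.mp (hA hy) with rfl | h
          · exact absurd hy hxA
          · exact h
        obtain ⟨c, hc, hAc⟩ := hcover A hAs
        exact ⟨g1 c, (hmemP' _).mpr (Or.inl ⟨c, hc, rfl⟩),
          by simp only [hg1, Finset.mem_insert]; exact Or.inr hAc⟩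
    · -- uniqueness
      have hclassify : ∀ D, D ∈ P' → ∀ A, A ∈ D →
          (∃ c ∈ P, D = g1 c ∧ (A ∈ c ∨ A = insert x (topF c))) ∨
          (∃ c ∈ P, D = g2 c ∧ ∃ B ∈ c.erase (topF c), A = insert x B) := by
        intro D hD A hAD
        rcases (hmemP' D).mp hD with ⟨c, hc, rfl⟩ | ⟨c, hc, hne, rfl⟩
        · simp only [hg1, Finset.mem_insert] at hAD
          rcases hAD with h | h
          · exact Or.inl ⟨c, hc, rfl, Or.inr h⟩
          · exact Or.inl ⟨c, hc, rfl, Or.inl h⟩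
        · simp only [hg2, Finset.mem_image] at hAD
          obtain ⟨B, hB, hBA⟩ := hAD
          exact Or.inr ⟨c, hc, rfl, B, hB, hBA.symm⟩
      intro A C hC C2 hC2 hAC hAC2
      rcases hclassify C hC A hAC with ⟨c, hc, hCe, hform⟩ | ⟨c, hc, hCe, B, hB, hform⟩ <;>
        rcases hclassify C2 hC2 A hAC2 with ⟨c2, hc2, hC2e, hform2⟩ | ⟨c2, hc2, hC2e, B2, hB2, hform2⟩
      · -- both g1
        rcases hform with h | h <;> rcases hform2 with h2 | h2
        · rw [hCe, hC2e, huniq A c hc c2 hc2 h h2]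
        · exact absurd (h2 ▸ Finset.mem_insert_self x _) (hnx c hc A h)
        · exact absurd (h ▸ Finset.mem_insert_self x _) (hnx c2 hc2 A h2)
        · have htt : topF c = topF c2 := by
            have e1 : (insert x (topF c)).erase x = topF c :=
              Finset.erase_insert (hxtop c hc)
            have e2 : (insert x (topF c2)).erase x = topF c2 :=
              Finset.erase_insert (hxtop c2 hc2)
            rw [← e1, ← e2, ← h, ← h2]
          have hcc : c = c2 := huniq (topF c) c hc c2 hc2 (htopmem c hc)
            (htt ▸ htopmem c2 hc2)
          rw [hCe, hC2e, hcc]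
      · -- g1 then g2 : impossible
        exfalso
        have hxA : x ∈ A := hform2 ▸ Finset.mem_insert_self x B2
        rcases hform with h | h
        · exact (hnx c hc A h) hxA
        · have hBB : topF c = B2 := by
            have e1 : (insert x (topF c)).erase x = topF c :=
              Finset.erase_insert (hxtop c hc)
            have e2 : (insert x B2).erase x = B2 :=
              Finset.erase_insert (fun hxB => hnx c2 hc2 B2 (Finset.mem_of_mem_erase hB2) hxB)
            rw [← e1, ← e2, ← h, ← hform2]
          have hcc : c = c2 := huniq (topF c) c hc c2 hc2 (htopmem c hc)
            (hBB ▸ Finset.mem_of_mem_erase hB2)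
          have : B2 ∈ c2.erase (topF c2) := hB2
          rw [← hcc] at this
          exact (Finset.ne_of_mem_erase this) (hBB.symm)
      · -- g2 then g1 : impossible
        exfalso
        have hxA : x ∈ A := hform ▸ Finset.mem_insert_self x B
        rcases hform2 with h | h
        · exact (hnx c2 hc2 A h) hxA
        · have hBB : topF c2 = B := by
            have e1 : (insert x (topF c2)).erase x = topF c2 :=
              Finset.erase_insert (hxtop c2 hc2)
            have e2 : (insert x B).erase x = B :=
              Finset.erase_insert (fun hxB => hnx c hc B (Finset.mem_of_mem_erase hB) hxB)
            rw [← e1, ← e2, ← h, ← hform]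
          have hcc : c2 = c := huniq (topF c2) c2 hc2 c hc (htopmem c2 hc2)
            (hBB ▸ Finset.mem_of_mem_erase hB)
          have : B ∈ c.erase (topF c) := hB
          rw [← hcc] at this
          exact (Finset.ne_of_mem_erase this) (hBB.symm)
      · -- both g2
        have hBB : B = B2 := by
          have e1 : (insert x B).erase x = B :=
            Finset.erase_insert (fun hxB => hnx c hc B (Finset.mem_of_mem_erase hB) hxB)
          have e2 : (insert x B2).erase x = B2 :=
            Finset.erase_insert (fun hxB => hnx c2 hc2 B2 (Finset.mem_of_mem_erase hB2) hxB)
          rw [← e1, ← e2, ← hform, ← hform2]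
        have hcc : c = c2 := huniq B c hc c2 hc2 (Finset.mem_of_mem_erase hB)
          (hBB ▸ Finset.mem_of_mem_erase hB2)
        rw [hCe, hC2e, hcc]
    · -- size interval property
      intro C hC
      have hcardN : (insert x s).card = s.card + 1 := Finset.card_insert_of_notMem hx
      rcases (hmemP' C).mp hC with ⟨c, hc, rfl⟩ | ⟨c, hc, hne, rfl⟩
      · obtain ⟨l, hl, himg⟩ := hS c hc
        refine ⟨l, by omega, ?_⟩
        have htc : (topF c).card = s.card - l := htopcard c hc l himg
        have hitc : (insert x (topF c)).card = s.card - l + 1 := by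
          rw [Finset.card_insert_of_notMem (hxtop c hc), htc]
        rw [hg1]
        simp only [Finset.image_insert, hitc, himg]
        have h5 : (insert x s).card - l = (s.card - l) + 1 := by omega
        rw [h5]
        ext j
        simp only [Finset.mem_insert, Finset.mem_Icc]
        omega
      · obtain ⟨l, hl, himg⟩ := hS c hc
        -- c.erase top nonempty → l < s.card - l
        obtain ⟨B0, hB0⟩ := hne
        have hB0c : B0 ∈ c := Finset.mem_of_mem_erase hB0
        have htc : (topF c).card = s.card - l := htopcard c hc l himg
        have hB0card : B0.card ∈ Finset.Icc l (s.card - l) := by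
          rw [← himg]; exact Finset.mem_image_of_mem _ hB0c
        have hB0lt : B0.card < s.card - l := by
          rcases lt_or_eq_of_le (Finset.mem_Icc.mp hB0card).2 with h | h
          · exact h
          · exact absurd (hcardinj c hc B0 hB0c (topF c) (htopmem c hc) (h.trans htc.symm))
              (Finset.ne_of_mem_erase hB0)
        have hllt : l < s.card - l := lt_of_le_of_lt (Finset.mem_Icc.mp hB0card).1 hB0lt
        refine ⟨l + 1, by omega, ?_⟩
        have himgerase : Finset.image Finset.card (c.erase (topF c)) =
            Finset.Icc l (s.card - l - 1) := by
          apply Finset.ext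
          intro j
          constructor
          · intro hj
            obtain ⟨B, hB, rfl⟩ := Finset.mem_image.mp hj
            have : B.card ∈ Finset.Icc l (s.card - l) := by
              rw [← himg]; exact Finset.mem_image_of_mem _ (Finset.mem_of_mem_erase hB)
            have hne2 : B.card ≠ s.card - l := by
              intro h
              exact (Finset.ne_of_mem_erase hB)
                (hcardinj c hc B (Finset.mem_of_mem_erase hB) (topF c) (htopmem c hc)
                  (h.trans htc.symm))
            have := Finset.mem_Icc.mp this
            exact Finset.mem_Icc.mpr ⟨this.1, by omega⟩
          · intro hj
            have hj' := Finset.mem_Icc.mp hj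
            have : j ∈ Finset.image Finset.card c := by
              rw [himg]; exact Finset.mem_Icc.mpr ⟨hj'.1, by omega⟩
            obtain ⟨B, hB, rfl⟩ := Finset.mem_image.mp this
            refine Finset.mem_image.mpr ⟨B, Finset.mem_erase.mpr ⟨?_, hB⟩, rfl⟩
            intro h
            rw [h, htc] at hj'
            omega
        rw [hg2]
        rw [Finset.image_image]
        have hcomp : ∀ B ∈ (c.erase (topF c) : Set (Finset γ)),
            (Finset.card ∘ insert x) B = ((· + 1) ∘ Finset.card) B := by
          intro B hB
          simp only [Function.comp_apply]
          exact Finset.card_insert_of_notMem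
            (fun hxB => hnx c hc B (Finset.mem_of_mem_erase hB) hxB)
        rw [Finset.image_congr hcomp, ← Finset.image_image, himgerase,
          Finset.image_add_right_Icc]
        have he1 : s.card - l - 1 + 1 = (insert x s).card - (l + 1) := by omega
        rw [he1]

end SCD


lemma scd_univ (γ : Type) [DecidableEq γ] [Fintype γ] :
    ∃ P : Finset (Finset (Finset γ)),
      (∀ c ∈ P, IsChain (· ⊆ ·) (c : Set (Finset γ))) ∧
      (∀ A : Finset γ, ∃ c ∈ P, A ∈ c) ∧
      (∀ A : Finset γ, ∀ c ∈ P, ∀ c' ∈ P, A ∈ c → A ∈ c' → c = c') ∧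
      P.card = (Fintype.card γ).choose (Fintype.card γ / 2) := by
  classical
  obtain ⟨P, hchain, _hsub, hcover, huniq, hS⟩ := scd_exists (Finset.univ : Finset γ)
  have hN : (Finset.univ : Finset γ).card = Fintype.card γ := Finset.card_univ
  have hcardinj : ∀ c ∈ P, ∀ A ∈ c, ∀ B ∈ c, A.card = B.card → A = B := by
    intro c hc A hA B hB hcard
    by_cases hAB : A = B
    · exact hAB
    · rcases hchain c hc hA hB hAB with h | h
      · exact Finset.eq_of_subset_of_card_le h (le_of_eq hcard.symm)
      · exact (Finset.eq_of_subset_of_card_le h (le_of_eq hcard)).symm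
  have hmid : ∀ c, ∃ A, c ∈ P → (A ∈ c ∧ A.card = Fintype.card γ / 2) := by
    intro c
    by_cases hc : c ∈ P
    · obtain ⟨l, hl, himg⟩ := hS c hc
      have : Fintype.card γ / 2 ∈ Finset.image Finset.card c := by
        rw [himg, Finset.mem_Icc, hN]
        omega
      obtain ⟨A, hA, hAcard⟩ := Finset.mem_image.mp this
      exact ⟨A, fun _ => ⟨hA, hAcard⟩⟩
    · exact ⟨∅, fun h => absurd h hc⟩
  choose midF hmidF using hmid
  refine ⟨P, hchain, fun A => hcover A (Finset.subset_univ A), huniq, ?_⟩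
  have hpc := Finset.card_powersetCard (Fintype.card γ / 2) (Finset.univ : Finset γ)
  rw [hN] at hpc
  rw [← hpc]
  apply Finset.card_bij (fun c _ => midF c)
  · intro c hc
    rw [Finset.mem_powersetCard]
    exact ⟨Finset.subset_univ _, (hmidF c hc).2⟩
  · intro c hc c' hc' heq
    exact huniq (midF c) c hc c' hc' (hmidF c hc).1 (heq ▸ (hmidF c' hc').1)
  · intro A hA
    obtain ⟨c, hc, hAc⟩ := hcover A (Finset.subset_univ A)
    refine ⟨c, hc, ?_⟩
    exact hcardinj c hc (midF c) (hmidF c hc).1 A hAc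
      ((hmidF c hc).2.trans (Finset.mem_powersetCard.mp hA).2.symm)

lemma le_choose_of_lt : ∀ b a : ℕ, 1 ≤ a → a < b → b ≤ b.choose a := by
  intro b
  induction b with
  | zero => intro a h1 h2; omega
  | succ b ih =>
    intro a h1 h2
    rcases eq_or_lt_of_le h1 with h | ha
    · rw [← h, Nat.choose_one_right]
    · have ha1 : a - 1 + 1 = a := by omega
      have hsplit : (b + 1).choose a = b.choose (a - 1) + b.choose a := by
        rw [← ha1, Nat.choose_succ_succ, ha1, Nat.succ_eq_add_one, ha1]
      rcases Nat.lt_or_ge a b with hab | hab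
      · have h3 : b ≤ b.choose (a - 1) := ih (a - 1) (by omega) (by omega)
        have h4 : 1 ≤ b.choose a := Nat.choose_pos (by omega)
        omega
      · have hab2 : a = b := by omega
        subst hab2
        rw [Nat.choose_succ_self_right]

section Perm
variable {n : ℕ}

lemma swap_image_of_mem (u v : Fin n) (S : Finset (Fin n)) (hu : u ∈ S) (hv : v ∈ S) :
    S.image (Equiv.swap u v) = S := by
  apply Finset.eq_of_subset_of_card_le
  · intro z hz
    obtain ⟨w, hw, rfl⟩ := Finset.mem_image.mp hz
    by_cases h1 : w = u
    · rw [h1, Equiv.swap_apply_left]; exact hv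
    · by_cases h2 : w = v
      · rw [h2, Equiv.swap_apply_right]; exact hu
      · rw [Equiv.swap_apply_of_ne_of_ne h1 h2]; exact hw
  · rw [Finset.card_image_of_injective _ (Equiv.injective _)]

lemma perm_exists_aux : ∀ (m : ℕ) (A A2 B : Finset (Fin n)), (A \ A2).card = m →
    A ⊆ B → A2 ⊆ B → A.card = A2.card →
    ∃ τ : Equiv.Perm (Fin n), A.image τ = A2 ∧ B.image τ = B := by
  intro m
  induction m with
  | zero =>
    intro A A2 B hm hAB hA2B hcard
    have hsub : A ⊆ A2 := by
      intro z hz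
      by_contra hz2
      have : z ∈ A \ A2 := Finset.mem_sdiff.mpr ⟨hz, hz2⟩
      rw [Finset.card_eq_zero.mp hm] at this
      exact absurd this (Finset.notMem_empty z)
    have : A = A2 := Finset.eq_of_subset_of_card_le hsub (le_of_eq hcard.symm)
    exact ⟨Equiv.refl _, by simp [this], by simp⟩
  | succ m ih =>
    intro A A2 B hm hAB hA2B hcard
    have hAne : (A \ A2).Nonempty := Finset.card_pos.mp (by omega)
    obtain ⟨u, hu⟩ := hAne
    have huA : u ∈ A := (Finset.mem_sdiff.mp hu).1
    have huA2 : u ∉ A2 := (Finset.mem_sdiff.mp hu).2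
    have hA2ne : (A2 \ A).Nonempty := by
      rw [← Finset.card_pos, Finset.card_sdiff_comm hcard.symm]
      omega
    obtain ⟨v, hv⟩ := hA2ne
    have hvA2 : v ∈ A2 := (Finset.mem_sdiff.mp hv).1
    have hvA : v ∉ A := (Finset.mem_sdiff.mp hv).2
    have himg : A.image (Equiv.swap u v) = insert v (A.erase u) := by
      ext z
      simp only [Finset.mem_image, Finset.mem_insert, Finset.mem_erase]
      constructor
      · rintro ⟨w, hw, rfl⟩
        by_cases h1 : w = u
        · rw [h1, Equiv.swap_apply_left]; exact Or.inl rfl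
        · by_cases h2 : w = v
          · exact absurd (h2 ▸ hw) hvA
          · rw [Equiv.swap_apply_of_ne_of_ne h1 h2]
            exact Or.inr ⟨h1, hw⟩
      · rintro (rfl | ⟨hzu, hz⟩)
        · exact ⟨u, huA, Equiv.swap_apply_left u z⟩
        · have hzv : z ≠ v := fun h => hvA (h ▸ hz)
          exact ⟨z, hz, Equiv.swap_apply_of_ne_of_ne hzu hzv⟩
    have hA'B : insert v (A.erase u) ⊆ B := by
      intro z hz
      rcases Finset.mem_insert.mp hz with rfl | hz2
      · exact hA2B hvA2
      · exact hAB (Finset.mem_of_mem_erase hz2)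
    have hA'card : (insert v (A.erase u)).card = A2.card := by
      rw [Finset.card_insert_of_notMem (fun h => hvA (Finset.mem_of_mem_erase h)),
        Finset.card_erase_of_mem huA]
      have : 1 ≤ A.card := Finset.card_pos.mpr ⟨u, huA⟩
      omega
    have hm' : (insert v (A.erase u) \ A2).card = m := by
      have : insert v (A.erase u) \ A2 = (A \ A2).erase u := by
        ext z
        simp only [Finset.mem_sdiff, Finset.mem_insert, Finset.mem_erase]
        constructor
        · rintro ⟨rfl | ⟨hzu, hz⟩, hz2⟩
          · exact absurd hvA2 hz2
          · exact ⟨hzu, hz, hz2⟩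
        · rintro ⟨hzu, hz, hz2⟩
          exact ⟨Or.inr ⟨hzu, hz⟩, hz2⟩
      rw [this, Finset.card_erase_of_mem hu, hm]
      omega
    obtain ⟨τ', hτ'A, hτ'B⟩ := ih (insert v (A.erase u)) A2 B hm' hA'B hA2B hA'card
    refine ⟨(Equiv.swap u v).trans τ', ?_, ?_⟩
    · have : A.image ((Equiv.swap u v).trans τ') = (A.image (Equiv.swap u v)).image τ' := by
        rw [Finset.image_image]; rfl
      rw [this, himg, hτ'A]
    · have : B.image ((Equiv.swap u v).trans τ') = (B.image (Equiv.swap u v)).image τ' := by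
        rw [Finset.image_image]; rfl
      rw [this, swap_image_of_mem u v B (hAB huA) (hA2B hvA2), hτ'B]

lemma perm_exists (A A2 B : Finset (Fin n)) (hA : A ⊆ B) (hA2 : A2 ⊆ B)
    (hcard : A.card = A2.card) :
    ∃ τ : Equiv.Perm (Fin n), A.image τ = A2 ∧ B.image τ = B :=
  perm_exists_aux (A \ A2).card A A2 B rfl hA hA2 hcard

end Perm

section Supersat
variable {n : ℕ}

def mapC (σ : Equiv.Perm (Fin n)) (c : Finset (Finset (Fin n))) : Finset (Finset (Fin n)) :=
  c.image (fun A => A.image σ)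

lemma image_image_eq (σ : Equiv.Perm (Fin n)) (A : Finset (Fin n)) :
    (A.image σ).image σ.symm = A := by
  rw [Finset.image_image]
  simp

lemma mem_mapC {σ : Equiv.Perm (Fin n)} {c : Finset (Finset (Fin n))} {A : Finset (Fin n)} :
    A ∈ mapC σ c ↔ A.image σ.symm ∈ c := by
  constructor
  · intro h
    obtain ⟨w, hw, rfl⟩ := Finset.mem_image.mp h
    rwa [image_image_eq]
  · intro h
    refine Finset.mem_image.mpr ⟨A.image σ.symm, h, ?_⟩
    have := image_image_eq σ.symm A
    simpa using this

lemma mapC_mul (τ σ : Equiv.Perm (Fin n)) (c : Finset (Finset (Fin n))) :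
    mapC (τ * σ) c = (mapC σ c).image (fun A => A.image τ) := by
  unfold mapC
  rw [Finset.image_image]
  apply Finset.image_congr
  intro A _
  simp only [Function.comp_apply]
  rw [Finset.image_image]
  rfl

lemma mem_mapC_mul_iff {τ σ : Equiv.Perm (Fin n)} {c : Finset (Finset (Fin n))}
    {X Y : Finset (Fin n)} (hXY : X.image τ = Y) :
    X ∈ mapC σ c ↔ Y ∈ mapC (τ * σ) c := by
  rw [mapC_mul]
  constructor
  · intro h
    exact hXY ▸ Finset.mem_image_of_mem _ h
  · intro h
    obtain ⟨Z, hZ, hZe⟩ := Finset.mem_image.mp h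
    have : Z = X := by
      have hinj : Function.Injective (fun A : Finset (Fin n) => A.image τ) :=
        fun S T hST => by
          have := congrArg (fun A : Finset (Fin n) => A.image τ.symm) hST
          simpa only [image_image_eq] using this
      exact hinj (hZe.trans hXY.symm)
    exact this ▸ hZ

lemma supersat (hn : 4 ≤ n) (W : Finset (Finset (Fin n)))
    (hW : ∀ F ∈ W, n / 4 < F.card) :
    n * W.card ≤ n * (n.choose (n / 2)) +
      4 * ((W ×ˢ W).filter (fun p => p.1 ⊂ p.2)).card := by
  classical
  obtain ⟨P, hchain, hcover, huniq, hPcard⟩ := scd_univ (Fin n)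
  rw [Fintype.card_fin] at hPcard
  have hcardfact : (Finset.univ : Finset (Equiv.Perm (Fin n))).card = n.factorial := by
    rw [Finset.card_univ, Fintype.card_perm, Fintype.card_fin]
  -- mapped chain facts
  have F_cardinj : ∀ (σ : Equiv.Perm (Fin n)), ∀ c ∈ P, ∀ A ∈ mapC σ c, ∀ B ∈ mapC σ c,
      A.card = B.card → A = B := by
    intro σ c hc A hA B hB hcd
    obtain ⟨A0, hA0, rfl⟩ := Finset.mem_image.mp hA
    obtain ⟨B0, hB0, rfl⟩ := Finset.mem_image.mp hB
    have hc0 : A0.card = B0.card := by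
      rwa [Finset.card_image_of_injective _ (Equiv.injective σ),
        Finset.card_image_of_injective _ (Equiv.injective σ)] at hcd
    by_cases hAB : A0 = B0
    · rw [hAB]
    · rcases hchain c hc hA0 hB0 hAB with h | h
      · rw [Finset.eq_of_subset_of_card_le h (le_of_eq hc0.symm)]
      · rw [Finset.eq_of_subset_of_card_le h (le_of_eq hc0)]
  have F_cover : ∀ (σ : Equiv.Perm (Fin n)) (A : Finset (Fin n)), ∃ c ∈ P, A ∈ mapC σ c := by
    intro σ A
    obtain ⟨c, hc, hAc⟩ := hcover (A.image σ.symm)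
    exact ⟨c, hc, mem_mapC.mpr hAc⟩
  have F_uniq : ∀ (σ : Equiv.Perm (Fin n)) (A : Finset (Fin n)), ∀ c ∈ P, ∀ c' ∈ P,
      A ∈ mapC σ c → A ∈ mapC σ c' → c = c' := by
    intro σ A c hc c' hc' h1 h2
    exact huniq (A.image σ.symm) c hc c' hc' (mem_mapC.mp h1) (mem_mapC.mp h2)
  have F_one : ∀ (σ : Equiv.Perm (Fin n)) (B : Finset (Fin n)),
      ∑ c ∈ P, (if B ∈ mapC σ c then 1 else 0) = 1 := by
    intro σ B
    obtain ⟨c0, hc0, hBc0⟩ := F_cover σ B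
    have hfilt : P.filter (fun c => B ∈ mapC σ c) = {c0} := by
      ext c'
      simp only [Finset.mem_filter, Finset.mem_singleton]
      constructor
      · rintro ⟨hc', hBc'⟩
        exact F_uniq σ B c' hc' c0 hc0 hBc' hBc0
      · rintro rfl
        exact ⟨hc0, hBc0⟩
    rw [← Finset.card_filter, hfilt, Finset.card_singleton]
  have F_chainM : ∀ (σ : Equiv.Perm (Fin n)), ∀ c ∈ P,
      IsChain (· ⊆ ·) ((mapC σ c : Finset (Finset (Fin n))) : Set (Finset (Fin n))) := by
    intro σ c hc A hA B hB hne
    obtain ⟨A0, hA0, rfl⟩ := Finset.mem_image.mp (Finset.mem_coe.mp hA)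
    obtain ⟨B0, hB0, rfl⟩ := Finset.mem_image.mp (Finset.mem_coe.mp hB)
    have hne0 : A0 ≠ B0 := fun h => hne (by rw [h])
    rcases hchain c hc hA0 hB0 hne0 with h | h
    · exact Or.inl (Finset.image_subset_image h)
    · exact Or.inr (Finset.image_subset_image h)
  set Pr := (W ×ˢ W).filter (fun p => p.1 ⊂ p.2) with hPrdef
  -- per sigma fiber bound
  have hfib : ∀ σ : Equiv.Perm (Fin n), W.card ≤ P.card +
      ∑ c ∈ P, (Pr.filter (fun p => p.1 ∈ mapC σ c ∧ p.2 ∈ mapC σ c)).card := by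
    intro σ
    have hcov : W ⊆ P.biUnion (fun c => W.filter (· ∈ mapC σ c)) := by
      intro A hA
      obtain ⟨c, hc, hAc⟩ := F_cover σ A
      exact Finset.mem_biUnion.mpr ⟨c, hc, Finset.mem_filter.mpr ⟨hA, hAc⟩⟩
    have h1 : W.card ≤ ∑ c ∈ P, (W.filter (· ∈ mapC σ c)).card :=
      le_trans (Finset.card_le_card hcov) (Finset.card_biUnion_le)
    have h2 : ∀ c ∈ P, (W.filter (· ∈ mapC σ c)).card ≤
        1 + (Pr.filter (fun p => p.1 ∈ mapC σ c ∧ p.2 ∈ mapC σ c)).card := by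
      intro c hc
      rcases Finset.eq_empty_or_nonempty (W.filter (· ∈ mapC σ c)) with he | hne
      · rw [he]; simp
      · obtain ⟨M, hM, hMmax⟩ := Finset.exists_max_image _ Finset.card hne
        have hMW : M ∈ W := (Finset.mem_filter.mp hM).1
        have hMc : M ∈ mapC σ c := (Finset.mem_filter.mp hM).2
        have hinj : ∀ A ∈ (W.filter (· ∈ mapC σ c)).erase M,
            (A, M) ∈ Pr.filter (fun p => p.1 ∈ mapC σ c ∧ p.2 ∈ mapC σ c) := by
          intro A hA
          have hAne : A ≠ M := (Finset.mem_erase.mp hA).1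
          have hAmem := (Finset.mem_erase.mp hA).2
          have hAW : A ∈ W := (Finset.mem_filter.mp hAmem).1
          have hAc : A ∈ mapC σ c := (Finset.mem_filter.mp hAmem).2
          have hsub : A ⊂ M := by
            rcases F_chainM σ c hc (Finset.mem_coe.mpr hAc) (Finset.mem_coe.mpr hMc) hAne
              with h | h
            · exact Finset.ssubset_iff_subset_ne.mpr ⟨h, hAne⟩
            · exfalso
              exact hAne (Finset.eq_of_subset_of_card_le
                (h.trans (Finset.Subset.refl A)) (hMmax A hAmem) ▸ rfl)
          exact Finset.mem_filter.mpr ⟨Finset.mem_filter.mpr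
            ⟨Finset.mem_product.mpr ⟨hAW, hMW⟩, hsub⟩, hAc, hMc⟩
        have h3 : ((W.filter (· ∈ mapC σ c)).erase M).card ≤
            (Pr.filter (fun p => p.1 ∈ mapC σ c ∧ p.2 ∈ mapC σ c)).card := by
          apply Finset.card_le_card_of_injOn (fun A => (A, M)) hinj
          intro x _ y _ hxy
          exact (Prod.mk.injEq _ _ _ _ ▸ hxy).1
        have h4 := Finset.card_erase_of_mem hM
        have h5 := Finset.card_pos.mpr ⟨M, hM⟩
        omega
    calc W.card ≤ ∑ c ∈ P, (W.filter (· ∈ mapC σ c)).card := h1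
      _ ≤ ∑ c ∈ P, (1 + (Pr.filter (fun p => p.1 ∈ mapC σ c ∧ p.2 ∈ mapC σ c)).card) :=
          Finset.sum_le_sum h2
      _ = P.card + ∑ c ∈ P, (Pr.filter (fun p => p.1 ∈ mapC σ c ∧ p.2 ∈ mapC σ c)).card := by
          rw [Finset.sum_add_distrib, Finset.sum_const, smul_eq_mul, mul_one]
  -- total over all permutations
  have htot : n.factorial * W.card ≤ n.factorial * P.card +
      ∑ σ : Equiv.Perm (Fin n), ∑ c ∈ P,
        (Pr.filter (fun p => p.1 ∈ mapC σ c ∧ p.2 ∈ mapC σ c)).card := by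
    have := Finset.sum_le_sum (fun σ (_ : σ ∈ (Finset.univ : Finset (Equiv.Perm (Fin n)))) =>
      hfib σ)
    rw [Finset.sum_const, Finset.sum_add_distrib, Finset.sum_const, smul_eq_mul, smul_eq_mul,
      hcardfact] at this
    exact this
  -- swap the sums
  have hswap : ∑ σ : Equiv.Perm (Fin n), ∑ c ∈ P,
      (Pr.filter (fun p => p.1 ∈ mapC σ c ∧ p.2 ∈ mapC σ c)).card =
      ∑ p ∈ Pr, ∑ σ : Equiv.Perm (Fin n), ∑ c ∈ P,
        (if p.1 ∈ mapC σ c ∧ p.2 ∈ mapC σ c then 1 else 0) := by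
    have h1 : ∀ (σ : Equiv.Perm (Fin n)) (c : Finset (Finset (Fin n))),
        (Pr.filter (fun p => p.1 ∈ mapC σ c ∧ p.2 ∈ mapC σ c)).card =
        ∑ p ∈ Pr, (if p.1 ∈ mapC σ c ∧ p.2 ∈ mapC σ c then 1 else 0) :=
      fun σ c => Finset.card_filter _ _
    calc ∑ σ : Equiv.Perm (Fin n), ∑ c ∈ P,
        (Pr.filter (fun p => p.1 ∈ mapC σ c ∧ p.2 ∈ mapC σ c)).card
        = ∑ σ : Equiv.Perm (Fin n), ∑ c ∈ P, ∑ p ∈ Pr,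
            (if p.1 ∈ mapC σ c ∧ p.2 ∈ mapC σ c then 1 else 0) := by
          exact Finset.sum_congr rfl (fun σ _ => Finset.sum_congr rfl (fun c _ => h1 σ c))
      _ = ∑ σ : Equiv.Perm (Fin n), ∑ p ∈ Pr, ∑ c ∈ P,
            (if p.1 ∈ mapC σ c ∧ p.2 ∈ mapC σ c then 1 else 0) :=
          Finset.sum_congr rfl (fun σ _ => Finset.sum_comm)
      _ = ∑ p ∈ Pr, ∑ σ : Equiv.Perm (Fin n), ∑ c ∈ P,
            (if p.1 ∈ mapC σ c ∧ p.2 ∈ mapC σ c then 1 else 0) := Finset.sum_comm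
  -- key bound for a single pair
  have hkey : ∀ p ∈ Pr, n * (∑ σ : Equiv.Perm (Fin n), ∑ c ∈ P,
      (if p.1 ∈ mapC σ c ∧ p.2 ∈ mapC σ c then 1 else 0)) ≤ 4 * n.factorial := by
    rintro ⟨A, B⟩ hp
    simp only [hPrdef, Finset.mem_filter, Finset.mem_product] at hp
    obtain ⟨⟨hAW, hBW⟩, hAB⟩ := hp
    have hab : A.card < B.card := Finset.card_lt_card hAB
    have haq : n / 4 < A.card := hW A hAW
    have ha1 : 1 ≤ A.card := by omega
    -- symmetry: same count for all A2 ⊆ B of the same size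
    have hsymm : ∀ A2 ∈ Finset.powersetCard A.card B,
        (∑ σ : Equiv.Perm (Fin n), ∑ c ∈ P,
          (if A2 ∈ mapC σ c ∧ B ∈ mapC σ c then 1 else 0)) =
        (∑ σ : Equiv.Perm (Fin n), ∑ c ∈ P,
          (if A ∈ mapC σ c ∧ B ∈ mapC σ c then 1 else 0)) := by
      intro A2 hA2
      rw [Finset.mem_powersetCard] at hA2
      obtain ⟨τ, hτA, hτB⟩ := perm_exists A A2 B hAB.subset hA2.1 hA2.2.symm
      symm
      apply Fintype.sum_equiv (Equiv.mulLeft τ)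
      intro σ
      apply Finset.sum_congr rfl
      intro c _
      congr 1
      rw [eq_iff_iff]
      constructor
      · rintro ⟨h1, h2⟩
        exact ⟨(mem_mapC_mul_iff hτA).mp h1, (mem_mapC_mul_iff hτB).mp h2⟩
      · rintro ⟨h1, h2⟩
        exact ⟨(mem_mapC_mul_iff hτA).mpr h1, (mem_mapC_mul_iff hτB).mpr h2⟩
    -- sum over all A2 is at most n!
    have hsum_le : ∑ A2 ∈ Finset.powersetCard A.card B,
        (∑ σ : Equiv.Perm (Fin n), ∑ c ∈ P,
          (if A2 ∈ mapC σ c ∧ B ∈ mapC σ c then 1 else 0)) ≤ n.factorial := by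
      have hswap2 : ∑ A2 ∈ Finset.powersetCard A.card B,
          (∑ σ : Equiv.Perm (Fin n), ∑ c ∈ P,
            (if A2 ∈ mapC σ c ∧ B ∈ mapC σ c then 1 else 0)) =
          ∑ σ : Equiv.Perm (Fin n), ∑ c ∈ P, ∑ A2 ∈ Finset.powersetCard A.card B,
            (if A2 ∈ mapC σ c ∧ B ∈ mapC σ c then 1 else 0) := by
        rw [Finset.sum_comm]
        exact Finset.sum_congr rfl (fun σ _ => Finset.sum_comm)
      rw [hswap2]
      have hper : ∀ σ : Equiv.Perm (Fin n), ∑ c ∈ P, ∑ A2 ∈ Finset.powersetCard A.card B,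
          (if A2 ∈ mapC σ c ∧ B ∈ mapC σ c then 1 else 0) ≤ 1 := by
        intro σ
        have hc_le : ∀ c ∈ P, ∑ A2 ∈ Finset.powersetCard A.card B,
            (if A2 ∈ mapC σ c ∧ B ∈ mapC σ c then 1 else 0) ≤
            (if B ∈ mapC σ c then 1 else 0) := by
          intro c hc
          by_cases hB : B ∈ mapC σ c
          · simp only [hB, and_true, if_true]
            have : ∑ A2 ∈ Finset.powersetCard A.card B,
                (if A2 ∈ mapC σ c then 1 else 0) =
                ((Finset.powersetCard A.card B).filter (· ∈ mapC σ c)).card :=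
              (Finset.card_filter _ _).symm
            rw [this]
            apply Finset.card_le_one.mpr
            intro x hx y hy
            have hx1 := Finset.mem_filter.mp hx
            have hy1 := Finset.mem_filter.mp hy
            exact F_cardinj σ c hc x hx1.2 y hy1.2
              ((Finset.mem_powersetCard.mp hx1.1).2.trans
                (Finset.mem_powersetCard.mp hy1.1).2.symm)
          · simp [hB]
        calc ∑ c ∈ P, ∑ A2 ∈ Finset.powersetCard A.card B,
            (if A2 ∈ mapC σ c ∧ B ∈ mapC σ c then 1 else 0)
            ≤ ∑ c ∈ P, (if B ∈ mapC σ c then 1 else 0) := Finset.sum_le_sum hc_le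
          _ = 1 := F_one σ B
      calc ∑ σ : Equiv.Perm (Fin n), ∑ c ∈ P, ∑ A2 ∈ Finset.powersetCard A.card B,
          (if A2 ∈ mapC σ c ∧ B ∈ mapC σ c then 1 else 0)
          ≤ ∑ _σ : Equiv.Perm (Fin n), 1 := Finset.sum_le_sum (fun σ _ => hper σ)
        _ = n.factorial := by rw [Finset.sum_const, smul_eq_mul, mul_one, hcardfact]
    -- constant sum
    have hconst : ∑ A2 ∈ Finset.powersetCard A.card B,
        (∑ σ : Equiv.Perm (Fin n), ∑ c ∈ P,
          (if A2 ∈ mapC σ c ∧ B ∈ mapC σ c then 1 else 0)) =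
        (B.card.choose A.card) * (∑ σ : Equiv.Perm (Fin n), ∑ c ∈ P,
          (if A ∈ mapC σ c ∧ B ∈ mapC σ c then 1 else 0)) := by
      rw [Finset.sum_congr rfl hsymm, Finset.sum_const, smul_eq_mul,
        Finset.card_powersetCard]
    have hchoose_ge : B.card ≤ B.card.choose A.card := le_choose_of_lt B.card A.card ha1 hab
    have hn4 : n ≤ 4 * B.card := by omega
    have hstep : (B.card.choose A.card) * (∑ σ : Equiv.Perm (Fin n), ∑ c ∈ P,
        (if A ∈ mapC σ c ∧ B ∈ mapC σ c then 1 else 0)) ≤ n.factorial := by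
      rw [← hconst]; exact hsum_le
    calc n * (∑ σ : Equiv.Perm (Fin n), ∑ c ∈ P,
        (if A ∈ mapC σ c ∧ B ∈ mapC σ c then 1 else 0))
        ≤ (4 * B.card.choose A.card) * (∑ σ : Equiv.Perm (Fin n), ∑ c ∈ P,
          (if A ∈ mapC σ c ∧ B ∈ mapC σ c then 1 else 0)) := by
          apply Nat.mul_le_mul_right
          omega
      _ = 4 * ((B.card.choose A.card) * (∑ σ : Equiv.Perm (Fin n), ∑ c ∈ P,
          (if A ∈ mapC σ c ∧ B ∈ mapC σ c then 1 else 0))) := by ring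
      _ ≤ 4 * n.factorial := Nat.mul_le_mul_left 4 hstep
  -- final assembly
  have hT : n * (∑ p ∈ Pr, ∑ σ : Equiv.Perm (Fin n), ∑ c ∈ P,
      (if p.1 ∈ mapC σ c ∧ p.2 ∈ mapC σ c then 1 else 0)) ≤ Pr.card * (4 * n.factorial) := by
    rw [Finset.mul_sum]
    calc ∑ p ∈ Pr, n * (∑ σ : Equiv.Perm (Fin n), ∑ c ∈ P,
        (if p.1 ∈ mapC σ c ∧ p.2 ∈ mapC σ c then 1 else 0))
        ≤ ∑ _p ∈ Pr, 4 * n.factorial := Finset.sum_le_sum hkey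
      _ = Pr.card * (4 * n.factorial) := by rw [Finset.sum_const, smul_eq_mul]
  have hfinal : n.factorial * (n * W.card) ≤ n.factorial * (n * P.card + 4 * Pr.card) := by
    have h1 : n * (n.factorial * W.card) ≤ n * (n.factorial * P.card) +
        n * (∑ p ∈ Pr, ∑ σ : Equiv.Perm (Fin n), ∑ c ∈ P,
          (if p.1 ∈ mapC σ c ∧ p.2 ∈ mapC σ c then 1 else 0)) := by
      rw [← Nat.mul_add]
      apply Nat.mul_le_mul_left
      rw [← hswap]
      exact htot
    have h2 := le_trans h1 (Nat.add_le_add_left hT _)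
    calc n.factorial * (n * W.card) = n * (n.factorial * W.card) := by ring
      _ ≤ n * (n.factorial * P.card) + Pr.card * (4 * n.factorial) := h2
      _ = n.factorial * (n * P.card + 4 * Pr.card) := by ring
  have := Nat.le_of_mul_le_mul_left hfinal (Nat.factorial_pos n)
  rw [hPcard] at this
  exact this

end Supersat


section Peel
variable {n : ℕ}

lemma peeling (k : ℕ) (W : Finset (Finset (Fin n)))
    (hP : 2 * k * W.card < ((W ×ˢ W).filter (fun p => p.1 ⊂ p.2)).card) :
    ∃ M₀ M₁ : Finset (Finset (Fin n)), M₀ ⊆ W ∧ M₁ ⊆ W ∧ (M₀.Nonempty ∨ M₁.Nonempty) ∧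
      (∀ S ∈ M₀, k ≤ (M₁.filter (fun B => S ⊂ B)).card) ∧
      (∀ S ∈ M₁, k ≤ (M₀.filter (fun B => B ⊂ S)).card) := by
  classical
  set f0 : Finset (Finset (Fin n)) × Finset (Finset (Fin n)) →
      Finset (Finset (Fin n)) × Finset (Finset (Fin n)) :=
    fun M => (M.1.filter (fun S => k ≤ (M.2.filter (fun B => S ⊂ B)).card),
              M.2.filter (fun S => k ≤ (M.1.filter (fun B => B ⊂ S)).card)) with hf0
  set seq : ℕ → Finset (Finset (Fin n)) × Finset (Finset (Fin n)) :=
    fun t => f0^[t] (W, W) with hseq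
  have hseq0 : seq 0 = (W, W) := rfl
  have hseqS : ∀ t, seq (t + 1) = f0 (seq t) := by
    intro t
    rw [hseq]
    exact Function.iterate_succ_apply' f0 t (W, W)
  have hsub1 : ∀ t, (seq (t + 1)).1 ⊆ (seq t).1 := by
    intro t; rw [hseqS t]; exact Finset.filter_subset _ _
  have hsub2 : ∀ t, (seq (t + 1)).2 ⊆ (seq t).2 := by
    intro t; rw [hseqS t]; exact Finset.filter_subset _ _
  have hsubW : ∀ t, (seq t).1 ⊆ W ∧ (seq t).2 ⊆ W := by
    intro t
    induction t with
    | zero => exact ⟨Finset.Subset.refl W, Finset.Subset.refl W⟩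
    | succ t ih => exact ⟨(hsub1 t).trans ih.1, (hsub2 t).trans ih.2⟩
  set Φ : ℕ → ℕ := fun t =>
    (((seq t).1 ×ˢ (seq t).2).filter (fun p => p.1 ⊂ p.2)).card with hΦ
  have hstep : ∀ t, Φ t ≤ Φ (t + 1) +
      k * ((seq t).1 \ (seq (t + 1)).1).card + k * ((seq t).2 \ (seq (t + 1)).2).card := by
    intro t
    have hsplit : (((seq t).1 ×ˢ (seq t).2).filter (fun p => p.1 ⊂ p.2)) ⊆
        ((((seq (t+1)).1 ×ˢ (seq (t+1)).2).filter (fun p => p.1 ⊂ p.2)) ∪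
        ((((seq t).1 \ (seq (t+1)).1) ×ˢ (seq t).2).filter (fun p => p.1 ⊂ p.2))) ∪
        (((seq t).1 ×ˢ ((seq t).2 \ (seq (t+1)).2)).filter (fun p => p.1 ⊂ p.2)) := by
      intro p hp
      obtain ⟨hmem, hlt⟩ := Finset.mem_filter.mp hp
      obtain ⟨h1, h2⟩ := Finset.mem_product.mp hmem
      by_cases ha : p.1 ∈ (seq (t+1)).1
      · by_cases hb : p.2 ∈ (seq (t+1)).2
        · exact Finset.mem_union_left _ (Finset.mem_union_left _ (Finset.mem_filter.mpr
            ⟨Finset.mem_product.mpr ⟨ha, hb⟩, hlt⟩))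
        · exact Finset.mem_union_right _ (Finset.mem_filter.mpr
            ⟨Finset.mem_product.mpr ⟨h1, Finset.mem_sdiff.mpr ⟨h2, hb⟩⟩, hlt⟩)
      · exact Finset.mem_union_left _ (Finset.mem_union_right _ (Finset.mem_filter.mpr
          ⟨Finset.mem_product.mpr ⟨Finset.mem_sdiff.mpr ⟨h1, ha⟩, h2⟩, hlt⟩))
    have hlost1 : ((((seq t).1 \ (seq (t+1)).1) ×ˢ (seq t).2).filter
        (fun p => p.1 ⊂ p.2)).card ≤ k * ((seq t).1 \ (seq (t+1)).1).card := by
      have hsub : ((((seq t).1 \ (seq (t+1)).1) ×ˢ (seq t).2).filter (fun p => p.1 ⊂ p.2)) ⊆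
          ((seq t).1 \ (seq (t+1)).1).biUnion
            (fun S => ((seq t).2.filter (fun B => S ⊂ B)).image (fun B => (S, B))) := by
        intro p hp
        obtain ⟨hmem, hlt⟩ := Finset.mem_filter.mp hp
        obtain ⟨h1, h2⟩ := Finset.mem_product.mp hmem
        exact Finset.mem_biUnion.mpr ⟨p.1, h1, Finset.mem_image.mpr
          ⟨p.2, Finset.mem_filter.mpr ⟨h2, hlt⟩, rfl⟩⟩
      refine le_trans (Finset.card_le_card hsub) (le_trans Finset.card_biUnion_le ?_)
      have hper : ∀ S ∈ (seq t).1 \ (seq (t+1)).1,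
          (((seq t).2.filter (fun B => S ⊂ B)).image (fun B => (S, B))).card ≤ k := by
        intro S hS
        obtain ⟨hS1, hS2⟩ := Finset.mem_sdiff.mp hS
        have : ¬ (k ≤ ((seq t).2.filter (fun B => S ⊂ B)).card) := by
          intro hk
          apply hS2
          rw [hseqS t]
          exact Finset.mem_filter.mpr ⟨hS1, hk⟩
        exact le_trans Finset.card_image_le (by omega)
      calc ∑ S ∈ (seq t).1 \ (seq (t+1)).1,
          (((seq t).2.filter (fun B => S ⊂ B)).image (fun B => (S, B))).card
          ≤ ∑ _S ∈ (seq t).1 \ (seq (t+1)).1, k := Finset.sum_le_sum hper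
        _ = k * ((seq t).1 \ (seq (t+1)).1).card := by
            rw [Finset.sum_const, smul_eq_mul, mul_comm]
    have hlost2 : (((seq t).1 ×ˢ ((seq t).2 \ (seq (t+1)).2)).filter
        (fun p => p.1 ⊂ p.2)).card ≤ k * ((seq t).2 \ (seq (t+1)).2).card := by
      have hsub : (((seq t).1 ×ˢ ((seq t).2 \ (seq (t+1)).2)).filter (fun p => p.1 ⊂ p.2)) ⊆
          ((seq t).2 \ (seq (t+1)).2).biUnion
            (fun S => ((seq t).1.filter (fun B => B ⊂ S)).image (fun B => (B, S))) := by
        intro p hp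
        obtain ⟨hmem, hlt⟩ := Finset.mem_filter.mp hp
        obtain ⟨h1, h2⟩ := Finset.mem_product.mp hmem
        exact Finset.mem_biUnion.mpr ⟨p.2, h2, Finset.mem_image.mpr
          ⟨p.1, Finset.mem_filter.mpr ⟨h1, hlt⟩, rfl⟩⟩
      refine le_trans (Finset.card_le_card hsub) (le_trans Finset.card_biUnion_le ?_)
      have hper : ∀ S ∈ (seq t).2 \ (seq (t+1)).2,
          (((seq t).1.filter (fun B => B ⊂ S)).image (fun B => (B, S))).card ≤ k := by
        intro S hS
        obtain ⟨hS1, hS2⟩ := Finset.mem_sdiff.mp hS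
        have : ¬ (k ≤ ((seq t).1.filter (fun B => B ⊂ S)).card) := by
          intro hk
          apply hS2
          rw [hseqS t]
          exact Finset.mem_filter.mpr ⟨hS1, hk⟩
        exact le_trans Finset.card_image_le (by omega)
      calc ∑ S ∈ (seq t).2 \ (seq (t+1)).2,
          (((seq t).1.filter (fun B => B ⊂ S)).image (fun B => (B, S))).card
          ≤ ∑ _S ∈ (seq t).2 \ (seq (t+1)).2, k := Finset.sum_le_sum hper
        _ = k * ((seq t).2 \ (seq (t+1)).2).card := by
            rw [Finset.sum_const, smul_eq_mul, mul_comm]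
    have hPhit1 : Φ (t+1) =
        (((seq (t+1)).1 ×ˢ (seq (t+1)).2).filter (fun p => p.1 ⊂ p.2)).card := rfl
    calc Φ t ≤ ((((seq (t+1)).1 ×ˢ (seq (t+1)).2).filter (fun p => p.1 ⊂ p.2)) ∪
        ((((seq t).1 \ (seq (t+1)).1) ×ˢ (seq t).2).filter (fun p => p.1 ⊂ p.2)) ∪
        (((seq t).1 ×ˢ ((seq t).2 \ (seq (t+1)).2)).filter (fun p => p.1 ⊂ p.2))).card :=
          Finset.card_le_card hsplit
      _ ≤ ((((seq (t+1)).1 ×ˢ (seq (t+1)).2).filter (fun p => p.1 ⊂ p.2)) ∪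
        ((((seq t).1 \ (seq (t+1)).1) ×ˢ (seq t).2).filter (fun p => p.1 ⊂ p.2))).card +
        (((seq t).1 ×ˢ ((seq t).2 \ (seq (t+1)).2)).filter (fun p => p.1 ⊂ p.2)).card :=
          Finset.card_union_le _ _
      _ ≤ Φ (t+1) +
        ((((seq t).1 \ (seq (t+1)).1) ×ˢ (seq t).2).filter (fun p => p.1 ⊂ p.2)).card +
        (((seq t).1 ×ˢ ((seq t).2 \ (seq (t+1)).2)).filter (fun p => p.1 ⊂ p.2)).card := by
          have := Finset.card_union_le
            ((((seq (t+1)).1 ×ˢ (seq (t+1)).2).filter (fun p => p.1 ⊂ p.2)))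
            (((((seq t).1 \ (seq (t+1)).1) ×ˢ (seq t).2).filter (fun p => p.1 ⊂ p.2)))
          omega
      _ ≤ Φ (t + 1) + k * ((seq t).1 \ (seq (t + 1)).1).card +
          k * ((seq t).2 \ (seq (t + 1)).2).card := by omega
  -- cards decrease
  have hcard1 : ∀ t, ((seq t).1 \ (seq (t+1)).1).card = (seq t).1.card - (seq (t+1)).1.card :=
    fun t => Finset.card_sdiff_of_subset (hsub1 t)
  have hcard2 : ∀ t, ((seq t).2 \ (seq (t+1)).2).card = (seq t).2.card - (seq (t+1)).2.card :=
    fun t => Finset.card_sdiff_of_subset (hsub2 t)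
  have hmono1 : ∀ t, (seq (t+1)).1.card ≤ (seq t).1.card :=
    fun t => Finset.card_le_card (hsub1 t)
  have hmono2 : ∀ t, (seq (t+1)).2.card ≤ (seq t).2.card :=
    fun t => Finset.card_le_card (hsub2 t)
  -- telescoped bound
  have htel : ∀ T, Φ 0 ≤ Φ T + k * (W.card - (seq T).1.card) + k * (W.card - (seq T).2.card) := by
    intro T
    induction T with
    | zero => simp [hseq0]
    | succ T ih =>
      have h1 := hstep T
      rw [hcard1 T, hcard2 T] at h1
      have hW1 : (seq T).1.card ≤ W.card := Finset.card_le_card (hsubW T).1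
      have hW2 : (seq T).2.card ≤ W.card := Finset.card_le_card (hsubW T).2
      have hm1 := hmono1 T
      have hm2 := hmono2 T
      have e1 : (W.card - (seq T).1.card) + ((seq T).1.card - (seq (T+1)).1.card) =
          W.card - (seq (T+1)).1.card := by omega
      have e2 : (W.card - (seq T).2.card) + ((seq T).2.card - (seq (T+1)).2.card) =
          W.card - (seq (T+1)).2.card := by omega
      calc Φ 0 ≤ Φ T + k * (W.card - (seq T).1.card) + k * (W.card - (seq T).2.card) := ih
        _ ≤ (Φ (T+1) + k * ((seq T).1.card - (seq (T+1)).1.card) +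
              k * ((seq T).2.card - (seq (T+1)).2.card)) +
            k * (W.card - (seq T).1.card) + k * (W.card - (seq T).2.card) :=
          Nat.add_le_add_right (Nat.add_le_add_right h1 _) _
        _ = Φ (T+1) + k * (W.card - (seq (T+1)).1.card) +
            k * (W.card - (seq (T+1)).2.card) := by
          rw [← e1, ← e2, Nat.mul_add, Nat.mul_add]
          ring
  -- find a fixed point
  have hfix : ∃ t, t ≤ 2 * W.card ∧ seq (t+1) = seq t := by
    by_contra hcon
    push_neg at hcon
    have hdec : ∀ t, t ≤ 2 * W.card → (seq (t+1)).1.card + (seq (t+1)).2.card + 1 ≤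
        (seq t).1.card + (seq t).2.card := by
      intro t ht
      have hne := hcon t ht
      have hm1 := hmono1 t
      have hm2 := hmono2 t
      by_contra hcon2
      push_neg at hcon2
      have he1 : (seq (t+1)).1.card = (seq t).1.card := by omega
      have he2 : (seq (t+1)).2.card = (seq t).2.card := by omega
      have : (seq (t+1)).1 = (seq t).1 := Finset.eq_of_subset_of_card_le (hsub1 t) (le_of_eq he1.symm)
      have h2 : (seq (t+1)).2 = (seq t).2 := Finset.eq_of_subset_of_card_le (hsub2 t) (le_of_eq he2.symm)
      exact hne (Prod.ext this h2)
    have hacc : ∀ t, t ≤ 2 * W.card + 1 →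
        (seq t).1.card + (seq t).2.card + t ≤ 2 * W.card := by
      intro t
      induction t with
      | zero =>
        intro _
        show W.card + W.card + 0 ≤ 2 * W.card
        omega
      | succ t ih =>
        intro ht
        have h1 := ih (by omega)
        have h2 := hdec t (by omega)
        omega
    have := hacc (2 * W.card + 1) (le_refl _)
    omega
  obtain ⟨t0, _ht0, hfixt⟩ := hfix
  -- at the fixed point, the degree conditions hold
  have hprop1 : ∀ S ∈ (seq t0).1, k ≤ ((seq t0).2.filter (fun B => S ⊂ B)).card := by
    intro S hS
    have : S ∈ (seq (t0+1)).1 := by rw [hfixt]; exact hS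
    rw [hseqS t0] at this
    exact (Finset.mem_filter.mp this).2
  have hprop2 : ∀ S ∈ (seq t0).2, k ≤ ((seq t0).1.filter (fun B => B ⊂ S)).card := by
    intro S hS
    have : S ∈ (seq (t0+1)).2 := by rw [hfixt]; exact hS
    rw [hseqS t0] at this
    exact (Finset.mem_filter.mp this).2
  by_cases hempty : (seq t0).1 = ∅ ∧ (seq t0).2 = ∅
  · exfalso
    have hΦ0 : Φ t0 = 0 := by
      rw [hΦ]
      simp [hempty.1]
    have := htel t0
    rw [hΦ0] at this
    have hPr : Φ 0 = ((W ×ˢ W).filter (fun p => p.1 ⊂ p.2)).card := rfl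
    have hb1 : W.card - (seq t0).1.card ≤ W.card := Nat.sub_le _ _
    have hb2 : W.card - (seq t0).2.card ≤ W.card := Nat.sub_le _ _
    have : Φ 0 ≤ 2 * k * W.card := by
      have := htel t0
      rw [hΦ0] at this
      calc Φ 0 ≤ 0 + k * (W.card - (seq t0).1.card) + k * (W.card - (seq t0).2.card) := this
        _ ≤ 0 + k * W.card + k * W.card :=
            Nat.add_le_add (Nat.add_le_add_left (Nat.mul_le_mul_left k hb1) 0)
              (Nat.mul_le_mul_left k hb2)
        _ = 2 * k * W.card := by ring
    rw [hPr] at this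
    exact absurd this (not_le.mpr hP)
  · refine ⟨(seq t0).1, (seq t0).2, (hsubW t0).1, (hsubW t0).2, ?_, hprop1, hprop2⟩
    rcases Finset.eq_empty_or_nonempty (seq t0).1 with h1 | h1
    · rcases Finset.eq_empty_or_nonempty (seq t0).2 with h2 | h2
      · exact absurd ⟨h1, h2⟩ hempty
      · exact Or.inr h2
    · exact Or.inl h1

end Peel


section Tail

lemma choose_mono_le_half {n : ℕ} : ∀ k, ∀ j ≤ k, k ≤ n / 2 → n.choose j ≤ n.choose k := by
  intro k
  induction k with
  | zero => intro j hj _; interval_cases j; rfl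
  | succ k ih =>
    intro j hj hk
    rcases Nat.lt_or_ge j (k+1) with h | h
    · have h1 : n.choose j ≤ n.choose k := ih j (by omega) (by omega)
      have h2 : n.choose k ≤ n.choose (k+1) :=
        Nat.choose_le_succ_of_lt_half_left (by omega)
      omega
    · have : j = k + 1 := by omega
      rw [this]

lemma step5 {n : ℕ} (j : ℕ) (hj : 9 * j + 5 ≤ 4 * n) :
    5 * n.choose j ≤ 4 * n.choose (j + 1) := by
  have hid := Nat.choose_succ_right_eq n j
  have hjn : j ≤ n := by omega
  have key : (5 * n.choose j) * (j + 1) ≤ (4 * n.choose (j + 1)) * (j + 1) := by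
    have hr : (4 * n.choose (j + 1)) * (j + 1) = 4 * (n.choose j * (n - j)) := by
      rw [Nat.mul_assoc, hid]
    rw [hr]
    have h1 : (5 * n.choose j) * (j + 1) = n.choose j * (5 * j + 5) := by ring
    have h2 : 4 * (n.choose j * (n - j)) = n.choose j * (4 * (n - j)) := by ring
    rw [h1, h2]
    exact Nat.mul_le_mul_left _ (by omega)
  exact Nat.le_of_mul_le_mul_right key (by omega)

lemma iter5 {n : ℕ} (lo : ℕ) : ∀ E, 9 * (lo + E) ≤ 4 * n + 4 →
    5 ^ E * n.choose lo ≤ 4 ^ E * n.choose (lo + E) := by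
  intro E
  induction E with
  | zero => intro _; simp
  | succ E ih =>
    intro hE
    have h1 : 5 ^ E * n.choose lo ≤ 4 ^ E * n.choose (lo + E) := ih (by omega)
    have h2 : 5 * n.choose (lo + E) ≤ 4 * n.choose (lo + E + 1) :=
      step5 (lo + E) (by omega)
    calc 5 ^ (E + 1) * n.choose lo = 5 * (5 ^ E * n.choose lo) := by ring
      _ ≤ 5 * (4 ^ E * n.choose (lo + E)) := Nat.mul_le_mul_left _ h1
      _ = 4 ^ E * (5 * n.choose (lo + E)) := by ring
      _ ≤ 4 ^ E * (4 * n.choose (lo + E + 1)) := Nat.mul_le_mul_left _ h2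
      _ = 4 ^ (E + 1) * n.choose (lo + (E + 1)) := by ring_nf
  -- note: lo + E + 1 = lo + (E+1) definitional-ish

lemma binom_term (m : ℕ) (hm : 3 ≤ m) : m.choose 3 * 4 ^ m ≤ 64 * 5 ^ m := by
  have h5 : (5 : ℕ) ^ m = (4 + 1) ^ m := by norm_num
  have hexp : (4 + 1 : ℕ) ^ m = ∑ i ∈ Finset.range (m + 1), 4 ^ i * 1 ^ (m - i) * m.choose i :=
    add_pow 4 1 m
  have hterm : 4 ^ (m - 3) * 1 ^ (m - (m - 3)) * m.choose (m - 3) ≤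
      ∑ i ∈ Finset.range (m + 1), 4 ^ i * 1 ^ (m - i) * m.choose i := by
    apply Finset.single_le_sum (f := fun i => 4 ^ i * 1 ^ (m - i) * m.choose i)
    · intro i _; positivity
    · rw [Finset.mem_range]; omega
  have hsymm : m.choose (m - 3) = m.choose 3 := Nat.choose_symm hm
  have h1 : 4 ^ (m - 3) * m.choose 3 ≤ 5 ^ m := by
    rw [h5, hexp]
    calc 4 ^ (m - 3) * m.choose 3 = 4 ^ (m - 3) * 1 ^ (m - (m - 3)) * m.choose (m - 3) := by
          rw [hsymm, one_pow, mul_one]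
      _ ≤ _ := hterm
  have hm3 : (4:ℕ) ^ m = 64 * 4 ^ (m - 3) := by
    have h : m - 3 + 3 = m := by omega
    calc (4:ℕ) ^ m = 4 ^ (m - 3 + 3) := by rw [h]
      _ = 4 ^ (m - 3) * 4 ^ 3 := pow_add 4 _ _
      _ = 64 * 4 ^ (m - 3) := by ring
  calc m.choose 3 * 4 ^ m = 64 * (4 ^ (m - 3) * m.choose 3) := by
        rw [hm3]; ring
    _ ≤ 64 * 5 ^ m := Nat.mul_le_mul_left 64 h1

lemma tail_bound {n : ℕ} (hn : 16000 ≤ n) :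
    n * ((Finset.univ : Finset (Finset (Fin n))).filter (fun A => A.card ≤ n / 4)).card ≤
      16 * n.choose (n / 2) := by
  classical
  set lo := n / 4 with hlo
  set D := n / 8 with hD
  -- tail count
  have hTsub : (Finset.univ : Finset (Finset (Fin n))).filter (fun A => A.card ≤ n / 4) ⊆
      (Finset.range (lo + 1)).biUnion (fun j => Finset.powersetCard j Finset.univ) := by
    intro A hA
    have := (Finset.mem_filter.mp hA).2
    exact Finset.mem_biUnion.mpr ⟨A.card, Finset.mem_range.mpr (by omega),
      Finset.mem_powersetCard.mpr ⟨Finset.subset_univ A, rfl⟩⟩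
  have hTcard : ((Finset.univ : Finset (Finset (Fin n))).filter
      (fun A => A.card ≤ n / 4)).card ≤ (lo + 1) * n.choose lo := by
    refine le_trans (Finset.card_le_card hTsub) (le_trans Finset.card_biUnion_le ?_)
    have hper : ∀ j ∈ Finset.range (lo + 1),
        (Finset.powersetCard j (Finset.univ : Finset (Fin n))).card ≤ n.choose lo := by
      intro j hj
      have hj' := Finset.mem_range.mp hj
      rw [Finset.card_powersetCard, Finset.card_univ, Fintype.card_fin]
      exact choose_mono_le_half lo j (by omega) (by omega)
    calc ∑ j ∈ Finset.range (lo + 1), (Finset.powersetCard j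
          (Finset.univ : Finset (Fin n))).card
        ≤ ∑ _j ∈ Finset.range (lo + 1), n.choose lo := Finset.sum_le_sum hper
      _ = (lo + 1) * n.choose lo := by rw [Finset.sum_const, Finset.card_range, smul_eq_mul]
  -- decay
  have hiter : 5 ^ D * n.choose lo ≤ 4 ^ D * n.choose (lo + D) := iter5 lo D (by omega)
  have hmid : n.choose (lo + D) ≤ n.choose (n / 2) := Nat.choose_le_middle _ _
  -- numeric: 4 * (n * (lo+1)) ≤ D.choose 3
  have hnum : 4 * (n * (lo + 1)) ≤ D.choose 3 := by
    have hdesc : D.descFactorial 3 = 6 * D.choose 3 := by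
      rw [Nat.descFactorial_eq_factorial_mul_choose]
      norm_num [Nat.factorial]
    have hdesc2 : D.descFactorial 3 = (D - 2) * ((D - 1) * D) := by
      simp [Nat.descFactorial]
    have hq : 1944 * ((D - 2) * (D - 2)) ≤ (D - 2) * ((D - 2) * (D - 2)) := by
      apply Nat.mul_le_mul_right
      omega
    have hn9 : n ≤ 9 * (D - 2) := by omega
    have hsq : n * n ≤ 81 * ((D - 2) * (D - 2)) := by
      calc n * n ≤ (9 * (D - 2)) * (9 * (D - 2)) := Nat.mul_le_mul hn9 hn9
        _ = 81 * ((D - 2) * (D - 2)) := by ring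
    have hcube : (D - 2) * ((D - 2) * (D - 2)) ≤ (D - 2) * ((D - 1) * D) := by
      apply Nat.mul_le_mul_left
      apply Nat.mul_le_mul <;> omega
    have h24 : 24 * (n * (lo + 1)) ≤ 24 * (n * n) := by
      apply Nat.mul_le_mul_left
      apply Nat.mul_le_mul_left
      omega
    have hchain : 24 * (n * n) ≤ 6 * D.choose 3 := by
      calc 24 * (n * n) ≤ 24 * (81 * ((D - 2) * (D - 2))) := Nat.mul_le_mul_left _ hsq
        _ = 1944 * ((D - 2) * (D - 2)) := by ring
        _ ≤ (D - 2) * ((D - 2) * (D - 2)) := hq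
        _ ≤ (D - 2) * ((D - 1) * D) := hcube
        _ = D.descFactorial 3 := hdesc2.symm
        _ = 6 * D.choose 3 := hdesc
    have : 6 * (4 * (n * (lo + 1))) ≤ 6 * D.choose 3 := by
      calc 6 * (4 * (n * (lo + 1))) = 24 * (n * (lo + 1)) := by ring
        _ ≤ 24 * (n * n) := h24
        _ ≤ 6 * D.choose 3 := hchain
    omega
  have hD3 : 3 ≤ D := by omega
  have hbin := binom_term D hD3
  -- X * 4^D ≤ 16 * 5^D  where X = n * (lo+1)
  have hX : (n * (lo + 1)) * 4 ^ D ≤ 16 * 5 ^ D := by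
    have h1 : 4 * ((n * (lo + 1)) * 4 ^ D) ≤ D.choose 3 * 4 ^ D := by
      calc 4 * ((n * (lo + 1)) * 4 ^ D) = (4 * (n * (lo + 1))) * 4 ^ D := by ring
        _ ≤ D.choose 3 * 4 ^ D := Nat.mul_le_mul_right _ hnum
    have h2 : 4 * ((n * (lo + 1)) * 4 ^ D) ≤ 4 * (16 * 5 ^ D) := by
      calc 4 * ((n * (lo + 1)) * 4 ^ D) ≤ D.choose 3 * 4 ^ D := h1
        _ ≤ 64 * 5 ^ D := hbin
        _ = 4 * (16 * 5 ^ D) := by ring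
    omega
  -- combine
  have hmain : 5 ^ D * ((n * (lo + 1)) * n.choose lo) ≤ 5 ^ D * (16 * n.choose (n / 2)) := by
    calc 5 ^ D * ((n * (lo + 1)) * n.choose lo)
        = (n * (lo + 1)) * (5 ^ D * n.choose lo) := by ring
      _ ≤ (n * (lo + 1)) * (4 ^ D * n.choose (lo + D)) := Nat.mul_le_mul_left _ hiter
      _ = ((n * (lo + 1)) * 4 ^ D) * n.choose (lo + D) := by ring
      _ ≤ (16 * 5 ^ D) * n.choose (lo + D) := Nat.mul_le_mul_right _ hX
      _ ≤ (16 * 5 ^ D) * n.choose (n / 2) := Nat.mul_le_mul_left _ hmid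
      _ = 5 ^ D * (16 * n.choose (n / 2)) := by ring
  have hfin : (n * (lo + 1)) * n.choose lo ≤ 16 * n.choose (n / 2) :=
    Nat.le_of_mul_le_mul_left hmain (by positivity)
  calc n * ((Finset.univ : Finset (Finset (Fin n))).filter (fun A => A.card ≤ n / 4)).card
      ≤ n * ((lo + 1) * n.choose lo) := Nat.mul_le_mul_left _ hTcard
    _ = (n * (lo + 1)) * n.choose lo := by ring
    _ ≤ 16 * n.choose (n / 2) := hfin

end Tail



/-- If a finite poset `P` has Hasse diagram a tree and height `2`, then there is a
constant `c(P)` such that every family `𝓕 ⊆ 2^[n]` with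
`|𝓕| ≥ (1 + c/n)·C(n,⌊n/2⌋)` contains `P` as a (not necessarily induced) subposet:
an injection `f : P → 𝓕` with `a ≤ b → f a ⊆ f b`. -/
theorem stmt_8 (α : Type) [Fintype α] [PartialOrder α]
    (htree : (SimpleGraph.hasse α).IsTree) (hh : HasHeight α 2) :
    ∃ c : ℝ, ∀ n : ℕ, 1 ≤ n → ∀ 𝓕 : Finset (Finset (Fin n)),
      (1 + c / n) * (n.choose (n / 2) : ℝ) ≤ (𝓕.card : ℝ) →
      ∃ f : α → Finset (Fin n), Function.Injective f ∧ (∀ a, f a ∈ 𝓕) ∧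
        ∀ a b : α, a ≤ b → f a ⊆ f b := by
  classical
  have hNe : Nonempty α := htree.isConnected.nonempty
  set k := Fintype.card α with hk
  have hk1 : 1 ≤ k := Fintype.card_pos
  set n₀ : ℕ := 16000 + 32 * k with hn₀
  set C : ℕ := n₀ * 2 ^ n₀ + 64 * k with hC
  refine ⟨(C : ℝ), ?_⟩
  intro n hn 𝓕 hcard
  have hnR : (0 : ℝ) < (n : ℝ) := by positivity
  have hBpos : 0 < n.choose (n / 2) := Nat.choose_pos (by omega)
  have hBR : (1 : ℝ) ≤ (n.choose (n / 2) : ℝ) := by exact_mod_cast hBpos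
  by_cases hsmall : n ≤ n₀
  · -- small n : the hypothesis is contradictory
    exfalso
    have hFle : 𝓕.card ≤ 2 ^ n := by
      calc 𝓕.card ≤ (Finset.univ : Finset (Finset (Fin n))).card := Finset.card_le_univ 𝓕
        _ = 2 ^ n := by simp
    have hCge : n * 2 ^ n ≤ C := by
      have h1 : n * 2 ^ n ≤ n₀ * 2 ^ n₀ :=
        Nat.mul_le_mul hsmall (Nat.pow_le_pow_right (by omega) hsmall)
      omega
    have hCn : (2 : ℝ) ^ n ≤ (C : ℝ) / n := by
      rw [le_div_iff₀ hnR]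
      calc (2 : ℝ) ^ n * n = (n : ℝ) * 2 ^ n := by ring
        _ ≤ (C : ℝ) := by exact_mod_cast hCge
    have hbig : (2 : ℝ) ^ n < (1 + (C : ℝ) / n) * (n.choose (n / 2) : ℝ) := by
      have h1 : (1 + (C : ℝ) / n) * 1 ≤ (1 + (C : ℝ) / n) * (n.choose (n / 2) : ℝ) := by
        apply mul_le_mul_of_nonneg_left hBR
        have : (0:ℝ) ≤ (C : ℝ) / n := by positivity
        linarith
      have h2 : (2 : ℝ) ^ n < 1 + (C : ℝ) / n := by linarith
      calc (2:ℝ) ^ n < 1 + (C : ℝ) / n := h2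
        _ = (1 + (C : ℝ) / n) * 1 := by ring
        _ ≤ _ := h1
    have : (𝓕.card : ℝ) ≤ (2 : ℝ) ^ n := by exact_mod_cast hFle
    linarith
  · push_neg at hsmall
    -- large n
    have hn16000 : 16000 ≤ n := by omega
    have hn4 : 4 ≤ n := by omega
    -- convert the density hypothesis into ℕ
    have hNat : n * n.choose (n / 2) + 64 * k * n.choose (n / 2) ≤ n * 𝓕.card := by
      have hR : ((n : ℝ) + (C : ℝ)) * (n.choose (n / 2) : ℝ) ≤ (n : ℝ) * 𝓕.card := by
        have h1 : ((1 : ℝ) + (C : ℝ) / n) * (n.choose (n / 2) : ℝ) * n ≤ (𝓕.card : ℝ) * n :=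
          mul_le_mul_of_nonneg_right hcard (le_of_lt hnR)
        have hdc : ((C : ℝ) / n) * n = (C : ℝ) := div_mul_cancel₀ _ (ne_of_gt hnR)
        have h2 : ((1 : ℝ) + (C : ℝ) / n) * (n.choose (n / 2) : ℝ) * n =
            ((n : ℝ) + (C : ℝ)) * (n.choose (n / 2) : ℝ) := by
          calc ((1 : ℝ) + (C : ℝ) / n) * (n.choose (n / 2) : ℝ) * n
              = (n.choose (n / 2) : ℝ) * n + (((C : ℝ) / n) * n) * (n.choose (n / 2) : ℝ) := by
                ring
            _ = (n.choose (n / 2) : ℝ) * n + (C : ℝ) * (n.choose (n / 2) : ℝ) := by rw [hdc]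
            _ = ((n : ℝ) + (C : ℝ)) * (n.choose (n / 2) : ℝ) := by ring
        rw [h2] at h1
        linarith
      have hR2 : ((n : ℝ) + (64 * k : ℕ)) * (n.choose (n / 2) : ℝ) ≤ (n : ℝ) * 𝓕.card := by
        refine le_trans (mul_le_mul_of_nonneg_right ?_ (by positivity)) hR
        have : (64 * k : ℕ) ≤ C := by omega
        have := (Nat.cast_le (α := ℝ)).mpr this
        push_cast at this ⊢
        linarith
      have := hR2
      rw [show ((n : ℝ) + (64 * k : ℕ)) * (n.choose (n / 2) : ℝ) =
        ((n * n.choose (n / 2) + 64 * k * n.choose (n / 2) : ℕ) : ℝ) by push_cast; ring] at this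
      rw [show (n : ℝ) * 𝓕.card = ((n * 𝓕.card : ℕ) : ℝ) by push_cast; ring] at this
      exact_mod_cast this
    -- window
    set W := 𝓕.filter (fun F => n / 4 < F.card) with hW
    have hWprop : ∀ F ∈ W, n / 4 < F.card := fun F hF => (Finset.mem_filter.mp hF).2
    have hsplit : 𝓕.card ≤ W.card +
        ((Finset.univ : Finset (Finset (Fin n))).filter (fun A => A.card ≤ n / 4)).card := by
      have h1 : 𝓕 ⊆ W ∪ ((Finset.univ : Finset (Finset (Fin n))).filter
          (fun A => A.card ≤ n / 4)) := by
        intro A hA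
        rcases Nat.lt_or_ge (n / 4) A.card with h | h
        · exact Finset.mem_union_left _ (Finset.mem_filter.mpr ⟨hA, h⟩)
        · exact Finset.mem_union_right _ (Finset.mem_filter.mpr ⟨Finset.mem_univ A, h⟩)
      exact le_trans (Finset.card_le_card h1) (Finset.card_union_le _ _)
    have htail := tail_bound hn16000
    -- n * W.card is large
    have hWlarge : n * n.choose (n / 2) + 48 * k * n.choose (n / 2) ≤ n * W.card := by
      have h1 : n * 𝓕.card ≤ n * W.card + n *
          ((Finset.univ : Finset (Finset (Fin n))).filter (fun A => A.card ≤ n / 4)).card := by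
        calc n * 𝓕.card ≤ n * (W.card +
            ((Finset.univ : Finset (Finset (Fin n))).filter
              (fun A => A.card ≤ n / 4)).card) := Nat.mul_le_mul_left n hsplit
          _ = _ := by ring
      have h2 : 16 * n.choose (n / 2) + 48 * k * n.choose (n / 2) ≤
          64 * k * n.choose (n / 2) := by
        have h2a : 16 * n.choose (n / 2) ≤ 16 * k * n.choose (n / 2) := by
          apply Nat.mul_le_mul_right
          omega
        have h2b : 16 * k * n.choose (n / 2) + 48 * k * n.choose (n / 2) =
            64 * k * n.choose (n / 2) := by ring
        omega
      omega
    -- supersaturation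
    have hsup := supersat hn4 W hWprop
    set Pr := (W ×ˢ W).filter (fun p => p.1 ⊂ p.2) with hPr
    have hPrlarge : 12 * k * n.choose (n / 2) ≤ Pr.card := by
      have h48 : 4 * (12 * k * n.choose (n / 2)) = 48 * k * n.choose (n / 2) := by ring
      omega
    -- peeling hypothesis : 2 * k * W.card < Pr.card
    have hpeel_hyp : 2 * k * W.card < Pr.card := by
      -- 12 * n * (2*k*W.card) ≤ 2*(n*(12*k*B)) + 8*k*(4*Pr) ≤ 2*n*Pr + n*Pr < 12*n*Pr
      have e1 : 12 * (2 * k) * (n * W.card) ≤ 12 * (2 * k) * (n * n.choose (n / 2) + 4 * Pr.card) :=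
        Nat.mul_le_mul_left _ hsup
      have e2 : 24 * k * (n * n.choose (n / 2)) ≤ 2 * (n * Pr.card) := by
        calc 24 * k * (n * n.choose (n / 2)) = 2 * (n * (12 * k * n.choose (n / 2))) := by ring
          _ ≤ 2 * (n * Pr.card) := by
              apply Nat.mul_le_mul_left
              exact Nat.mul_le_mul_left n hPrlarge
      have e3 : 24 * k * (4 * Pr.card) ≤ 3 * (n * Pr.card) := by
        calc 24 * k * (4 * Pr.card) = (96 * k) * Pr.card := by ring
          _ ≤ (3 * n) * Pr.card := by
              apply Nat.mul_le_mul_right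
              omega
          _ = 3 * (n * Pr.card) := by ring
      have e4 : 12 * (2 * k) * (n * W.card) ≤ 5 * (n * Pr.card) := by
        calc 12 * (2 * k) * (n * W.card)
            ≤ 12 * (2 * k) * (n * n.choose (n / 2) + 4 * Pr.card) := e1
          _ = 24 * k * (n * n.choose (n / 2)) + 24 * k * (4 * Pr.card) := by ring
          _ ≤ 2 * (n * Pr.card) + 3 * (n * Pr.card) := Nat.add_le_add e2 e3
          _ = 5 * (n * Pr.card) := by ring
      have hPrpos : 0 < Pr.card := by
        have h0 : 0 < 12 * k := by omega
        have := Nat.mul_pos h0 hBpos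
        omega
      have e5 : 12 * (2 * k) * (n * W.card) < 12 * (n * Pr.card) := by
        have : 5 * (n * Pr.card) < 12 * (n * Pr.card) := by
          have hpos : 0 < n * Pr.card := Nat.mul_pos (by omega) hPrpos
          omega
        omega
      have e6 : (12 * n) * (2 * k * W.card) < (12 * n) * Pr.card := by
        calc (12 * n) * (2 * k * W.card) = 12 * (2 * k) * (n * W.card) := by ring
          _ < 12 * (n * Pr.card) := e5
          _ = (12 * n) * Pr.card := by ring
      exact Nat.lt_of_mul_lt_mul_left e6
    obtain ⟨M₀, M₁, hM₀W, hM₁W, hMne, hdeg₀, hdeg₁⟩ := peeling k W hpeel_hyp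
    obtain ⟨f, hfinj, hfmem, hford⟩ := embed_tree hh htree M₀ M₁ (le_refl k) hdeg₀ hdeg₁ hMne
    refine ⟨f, hfinj, ?_, ?_⟩
    · intro a
      rcases Finset.mem_union.mp (hfmem a) with h | h
      · exact (Finset.filter_subset _ _) (hM₀W h)
      · exact (Finset.filter_subset _ _) (hM₁W h)
    · intro a b hab
      rcases eq_or_lt_of_le hab with rfl | hlt
      · exact Finset.Subset.refl _
      · exact (hford a b hlt).subset
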